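/- arXiv:0909.0743 — 10 statements merged into one kernel-verified Lean document; each statement's English description precedes it below -/
import Mathlib

section
/- Let p be a prime and let h, m, n be positive integers with m ≥ n. Then for every s ∈ ℤ_p one has v_p( p^m · Δ_h^n C(s,m) ) ≥ n·(1 + v_p(h)); equivalently, ‖p^m · Δ_h^n C(s,m)‖_p ≤ p^{−n(1+v_p(h))}. -/
open Finset

/-- The forward difference operator `Δ_h^n` with increment `h ≥ 1`:
`Δ_h^n f(s) = ∑_{ν=0}^n (n choose ν)·(−1)^(n−ν)·f(s+νh)`. -/
noncomputable def deltaH (p : ℕ) [Fact p.Prime] (h : ℕ) (f : ℤ_[p] → ℤ_[p]) (n : ℕ)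
    (s : ℤ_[p]) : ℤ_[p] :=
  ∑ ν ∈ Finset.range (n + 1),
    (n.choose ν : ℤ_[p]) * (-1) ^ (n - ν) * f (s + (ν : ℤ_[p]) * (h : ℤ_[p]))

/-- The binomial polynomial `C(s,m) = s(s−1)⋯(s−m+1)/m!`, as a function `ℤ_[p] → ℤ_[p]`. -/
noncomputable def binomC (p : ℕ) [Fact p.Prime] (s : ℤ_[p]) (m : ℕ) : ℤ_[p] :=
  Ring.choose s m

section Aux

variable {p : ℕ} [Fact p.Prime]

/-- Pascal-type recurrence for the difference operator. -/
lemma deltaH_succ (h : ℕ) (f : ℤ_[p] → ℤ_[p]) (n : ℕ) (s : ℤ_[p]) :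
    deltaH p h f (n + 1) s = deltaH p h f n (s + (h : ℤ_[p])) - deltaH p h f n s := by
  unfold deltaH
  rw [Finset.sum_range_succ' _ (n + 1)]
  have e1 : ∀ ν ∈ Finset.range (n + 1),
      ((n + 1).choose (ν + 1) : ℤ_[p]) * (-1) ^ (n + 1 - (ν + 1)) *
          f (s + ((ν + 1 : ℕ) : ℤ_[p]) * (h : ℤ_[p]))
        = (n.choose ν : ℤ_[p]) * (-1) ^ (n - ν) * f (s + (h : ℤ_[p]) + (ν : ℤ_[p]) * h)
          + (n.choose (ν + 1) : ℤ_[p]) * (-1) ^ (n - ν) * f (s + ((ν + 1 : ℕ) : ℤ_[p]) * h) := by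
    intro ν hν
    have harg : s + ((ν + 1 : ℕ) : ℤ_[p]) * (h : ℤ_[p]) = s + (h : ℤ_[p]) + (ν : ℤ_[p]) * h := by
      push_cast; ring
    rw [Nat.choose_succ_succ, Nat.succ_sub_succ, harg]
    push_cast
    ring
  rw [Finset.sum_congr rfl e1, Finset.sum_add_distrib]
  have e2 : ∑ ν ∈ Finset.range (n + 1),
      (n.choose (ν + 1) : ℤ_[p]) * (-1) ^ (n - ν) * f (s + ((ν + 1 : ℕ) : ℤ_[p]) * h)
      = ∑ ν ∈ Finset.range n,
        (n.choose (ν + 1) : ℤ_[p]) * (-1) ^ (n - ν) * f (s + ((ν + 1 : ℕ) : ℤ_[p]) * h) := by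
    rw [Finset.sum_range_succ, Nat.choose_succ_self]
    simp
  rw [e2]
  have e3 : ∑ ν ∈ Finset.range (n + 1),
      (n.choose ν : ℤ_[p]) * (-1) ^ (n - ν) * f (s + (ν : ℤ_[p]) * (h : ℤ_[p]))
      = ∑ ν ∈ Finset.range n,
        (n.choose (ν + 1) : ℤ_[p]) * (-1) ^ (n - (ν + 1)) * f (s + ((ν + 1 : ℕ) : ℤ_[p]) * h)
        + (n.choose 0 : ℤ_[p]) * (-1) ^ (n - 0) * f (s + ((0 : ℕ) : ℤ_[p]) * h) := by
    rw [Finset.sum_range_succ' _ n]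
  rw [e3]
  have e4 : ∀ ν ∈ Finset.range n,
      (n.choose (ν + 1) : ℤ_[p]) * (-1) ^ (n - ν) * f (s + ((ν + 1 : ℕ) : ℤ_[p]) * h)
      = -((n.choose (ν + 1) : ℤ_[p]) * (-1) ^ (n - (ν + 1)) * f (s + ((ν + 1 : ℕ) : ℤ_[p]) * h)) := by
    intro ν hν
    have : n - ν = (n - (ν + 1)) + 1 := by
      have := Finset.mem_range.mp hν; omega
    rw [this, pow_succ]
    ring
  rw [Finset.sum_congr rfl e4, Finset.sum_neg_distrib]
  have e5 : ((n + 1).choose 0 : ℤ_[p]) * (-1) ^ (n + 1 - 0) * f (s + ((0:ℕ) : ℤ_[p]) * h)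
      = -((n.choose 0 : ℤ_[p]) * (-1) ^ (n - 0) * f (s + ((0:ℕ) : ℤ_[p]) * h)) := by
    simp [pow_succ]
  rw [e5]
  ring

/-- The iterate form: increasing the order amounts to differencing the function once. -/
lemma deltaH_succ' (h : ℕ) (f : ℤ_[p] → ℤ_[p]) (n : ℕ) (s : ℤ_[p]) :
    deltaH p h f (n + 1) s = deltaH p h (fun x => f (x + (h : ℤ_[p])) - f x) n s := by
  rw [deltaH_succ]
  unfold deltaH
  rw [← Finset.sum_sub_distrib]
  refine Finset.sum_congr rfl fun ν _ => ?_
  have : s + (h : ℤ_[p]) + (ν : ℤ_[p]) * h = s + (ν : ℤ_[p]) * h + (h : ℤ_[p]) := by ring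
  rw [this]
  ring

/-- Linearity of the difference operator over finite sums with constant coefficients. -/
lemma deltaH_sum {ι : Type*} (h : ℕ) (F : Finset ι) (c : ι → ℤ_[p]) (g : ι → ℤ_[p] → ℤ_[p])
    (n : ℕ) (s : ℤ_[p]) :
    deltaH p h (fun x => ∑ j ∈ F, c j * g j x) n s = ∑ j ∈ F, c j * deltaH p h (g j) n s := by
  unfold deltaH
  simp only [Finset.mul_sum]
  rw [Finset.sum_comm]
  refine Finset.sum_congr rfl fun j _ => ?_
  refine Finset.sum_congr rfl fun ν _ => ?_
  ring

/-- Chu–Vandermonde for `Ring.choose` with a natural number shift. -/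
lemma binomC_add_nat (s : ℤ_[p]) (h m : ℕ) :
    binomC p (s + (h : ℤ_[p])) m
      = ∑ k ∈ Finset.range (m + 1), (h.choose (m - k) : ℤ_[p]) * binomC p s k := by
  unfold binomC
  rw [Ring.add_choose_eq m (Commute.all _ _),
    Finset.Nat.sum_antidiagonal_eq_sum_range_succ_mk]
  refine Finset.sum_congr rfl fun k _ => ?_
  rw [Ring.choose_natCast]
  ring

lemma binomC_diff (h m : ℕ) :
    (fun x : ℤ_[p] => binomC p (x + (h : ℤ_[p])) m - binomC p x m)
      = fun x => ∑ k ∈ Finset.range m, (h.choose (m - k) : ℤ_[p]) * binomC p x k := by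
  funext x
  rw [binomC_add_nat, Finset.sum_range_succ, Nat.sub_self, Nat.choose_zero_right]
  push_cast
  ring

/-- Vanishing: the `n`-th difference of `C(·,m)` vanishes for `m < n`. -/
lemma deltaH_binomC_eq_zero (h : ℕ) :
    ∀ n m : ℕ, m < n → ∀ s : ℤ_[p], deltaH p h (fun x => binomC p x m) n s = 0 := by
  intro n
  induction n with
  | zero => intro m hm; omega
  | succ n ih =>
    intro m hm s
    rw [deltaH_succ', show (fun x : ℤ_[p] => binomC p (x + (h : ℤ_[p])) m - binomC p x m)
        = fun x => ∑ k ∈ Finset.range m, (h.choose (m - k) : ℤ_[p]) * binomC p x k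
      from binomC_diff h m, deltaH_sum]
    refine Finset.sum_eq_zero fun k hk => ?_
    rw [ih k (by have := Finset.mem_range.mp hk; omega) s, mul_zero]

/-- `p^(v_p(h)+1)` divides `C(h,j)·p^j` for `j ≥ 1` (in `ℕ`). -/
lemma nat_choose_pow_dvd (h j : ℕ) (hh : 0 < h) (hj : 0 < j) :
    p ^ (padicValNat p h + 1) ∣ h.choose j * p ^ j := by
  have hp : p.Prime := Fact.out
  set a := padicValNat p h with ha
  set v := padicValNat p j with hv
  have hpa : p ^ a ∣ h := pow_padicValNat_dvd
  have key : h * (h - 1).choose (j - 1) = h.choose j * j := by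
    have := Nat.add_one_mul_choose_eq (h - 1) (j - 1)
    rwa [show h - 1 + 1 = h from by omega, show j - 1 + 1 = j from by omega] at this
  have h2 : p ^ a ∣ h.choose j * j := key ▸ hpa.mul_right _
  obtain ⟨u, hu⟩ : p ^ v ∣ j := pow_padicValNat_dvd
  have hu0 : ¬ p ∣ u := by
    intro hdvd
    have : p ^ (v + 1) ∣ j := by
      obtain ⟨w, hw⟩ := hdvd
      exact ⟨w, by rw [hu, hw]; ring⟩
    have := (padicValNat_dvd_iff_le (by omega)).mp this
    omega
  have hcop : Nat.Coprime (p ^ a) u :=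
    Nat.Coprime.pow_left _ (hp.coprime_iff_not_dvd.mpr hu0)
  have h3 : p ^ a ∣ h.choose j * p ^ v := by
    refine hcop.dvd_of_dvd_mul_right ?_
    have : h.choose j * p ^ v * u = h.choose j * j := by rw [hu]; ring
    rw [this]; exact h2
  have hvj : v + 1 ≤ j := by
    have h5 : p ^ v ≤ j := Nat.le_of_dvd hj ⟨u, hu⟩
    have h6 : v < p ^ v := Nat.lt_pow_self (n := v) hp.one_lt
    omega
  calc p ^ (a + 1) = p ^ a * p ^ 1 := by rw [pow_add]
    _ ∣ (h.choose j * p ^ v) * p ^ 1 := mul_dvd_mul_right h3 _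
    _ = h.choose j * p ^ (v + 1) := by rw [pow_add]; ring
    _ ∣ h.choose j * p ^ j := mul_dvd_mul_left _ (pow_dvd_pow p hvj)

/-- Main divisibility, by induction on `n`. -/
lemma main_dvd (h : ℕ) (hh : 0 < h) :
    ∀ n m : ℕ, n ≤ m → ∀ s : ℤ_[p],
      (p : ℤ_[p]) ^ (n * (1 + padicValNat p h)) ∣
        (p : ℤ_[p]) ^ m * deltaH p h (fun x => binomC p x m) n s := by
  intro n
  induction n with
  | zero => intro m _ s; simp
  | succ n ih =>
    intro m hm s
    rw [deltaH_succ', show (fun x : ℤ_[p] => binomC p (x + (h : ℤ_[p])) m - binomC p x m)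
        = fun x => ∑ k ∈ Finset.range m, (h.choose (m - k) : ℤ_[p]) * binomC p x k
      from binomC_diff h m, deltaH_sum, Finset.mul_sum]
    refine Finset.dvd_sum fun k hk => ?_
    have hkm : k < m := Finset.mem_range.mp hk
    by_cases hnk : n ≤ k
    · have h1 : (p : ℤ_[p]) ^ (1 + padicValNat p h) ∣
          (h.choose (m - k) : ℤ_[p]) * (p : ℤ_[p]) ^ (m - k) := by
        have := nat_choose_pow_dvd (p := p) h (m - k) hh (by omega)
        have hc := Nat.cast_dvd_cast (α := ℤ_[p]) this
        push_cast at hc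
        rwa [add_comm (padicValNat p h) 1] at hc
      have h2 : (p : ℤ_[p]) ^ (n * (1 + padicValNat p h)) ∣
          (p : ℤ_[p]) ^ k * deltaH p h (fun x => binomC p x k) n s := ih k hnk s
      have hsplit : (p : ℤ_[p]) ^ m * ((h.choose (m - k) : ℤ_[p]) * deltaH p h (fun x => binomC p x k) n s)
          = ((h.choose (m - k) : ℤ_[p]) * (p : ℤ_[p]) ^ (m - k)) *
            ((p : ℤ_[p]) ^ k * deltaH p h (fun x => binomC p x k) n s) := by
        rw [show (p : ℤ_[p]) ^ m = (p : ℤ_[p]) ^ (m - k) * (p : ℤ_[p]) ^ k by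
          rw [← pow_add]; congr 1; omega]
        ring
      rw [hsplit, show (n + 1) * (1 + padicValNat p h)
          = (1 + padicValNat p h) + n * (1 + padicValNat p h) by ring, pow_add]
      exact mul_dvd_mul h1 h2
    · rw [deltaH_binomC_eq_zero h n k (by omega) s, mul_zero, mul_zero]
      exact dvd_zero _

end Aux

theorem stmt0 (p : ℕ) [Fact p.Prime] (h m n : ℕ) (hh : 0 < h) (hn : 0 < n) (hnm : n ≤ m)
    (s : ℤ_[p]) :
    (p : ℤ_[p]) ^ (n * (1 + padicValNat p h)) ∣
        (p : ℤ_[p]) ^ m * deltaH p h (fun x => binomC p x m) n s ∧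
      ‖(p : ℤ_[p]) ^ m * deltaH p h (fun x => binomC p x m) n s‖ ≤
        (p : ℝ) ^ (-((n * (1 + padicValNat p h) : ℕ) : ℤ)) := by
  have hd := main_dvd (p := p) h hh n m hnm s
  refine ⟨hd, ?_⟩
  rw [PadicInt.norm_le_pow_iff_mem_span_pow]
  rwa [Ideal.mem_span_singleton]
end

section
/- Let h, m, n be positive integers with m ≥ n, and for 0 ≤ ν ≤ n(h−1) let c_ν be the coefficient of x^ν in the polynomial (1 + x + ⋯ + x^{h−1})^n (the h-nomial coefficients of order n). Then for every s ∈ ℤ_p: Δ_h^n C(s,m) = Σ_{ν=0}^{n(h−1)} c_ν · C(s+ν, m−n). Moreover Σ_{ν=0}^{n(h−1)} c_ν = h^n. -/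
open Finset

open Polynomial

lemma aux_deg (h n : ℕ) :
    ((∑ i ∈ Finset.range h, (Polynomial.X : Polynomial ℤ) ^ i) ^ n).natDegree < n * (h - 1) + 1 := by
  have h1 : (∑ i ∈ Finset.range h, (Polynomial.X : Polynomial ℤ) ^ i).natDegree ≤ h - 1 := by
    apply Polynomial.natDegree_sum_le_of_forall_le
    intro i hi
    simp only [Polynomial.natDegree_X_pow]
    exact Nat.le_sub_one_of_lt (Finset.mem_range.mp hi)
  have := Polynomial.natDegree_pow_le
    (p := ∑ i ∈ Finset.range h, (Polynomial.X : Polynomial ℤ) ^ i) (n := n)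
  have := Nat.mul_le_mul_left n h1
  omega

lemma aux_poly (h n : ℕ) (hh : 0 < h) :
    ((X + 1 : Polynomial ℤ) ^ h - 1) ^ n =
      (∑ ν ∈ Finset.range (n * (h - 1) + 1),
        C (((∑ i ∈ Finset.range h, (X : Polynomial ℤ) ^ i) ^ n).coeff ν) * (X + 1) ^ ν) * X ^ n := by
  have e1 : (X + 1 : Polynomial ℤ) ^ h - 1 = (∑ i ∈ Finset.range h, (X + 1 : Polynomial ℤ) ^ i) * X := by
    have := geom_sum_mul (X + 1 : Polynomial ℤ) h
    simpa using this.symm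
  set P : Polynomial ℤ := (∑ i ∈ Finset.range h, (X : Polynomial ℤ) ^ i) ^ n with hP
  have e2 : (∑ i ∈ Finset.range h, (X + 1 : Polynomial ℤ) ^ i) ^ n
      = ∑ ν ∈ Finset.range (n * (h - 1) + 1), C (P.coeff ν) * (X + 1) ^ ν := by
    have e3 : (∑ i ∈ Finset.range h, (X + 1 : Polynomial ℤ) ^ i) ^ n = P.comp (X + 1) := by
      simp [hP, Polynomial.pow_comp, Polynomial.X_comp]
    rw [e3]
    conv_lhs => rw [P.as_sum_range' _ (aux_deg h n)]
    simp [Polynomial.sum_comp, Polynomial.monomial_comp]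
  rw [e1, mul_pow, e2]

lemma aux_nat (h m n : ℕ) (hh : 0 < h) (hnm : n ≤ m) (t : ℕ) :
    ∑ ν ∈ Finset.range (n + 1), (n.choose ν : ℤ) * (-1) ^ (n - ν) * ((t + ν * h).choose m : ℤ)
      = ∑ ν ∈ Finset.range (n * (h - 1) + 1),
          ((∑ i ∈ Finset.range h, (X : Polynomial ℤ) ^ i) ^ n).coeff ν * ((t + ν).choose (m - n) : ℤ) := by
  have key := congrArg (fun q => ((X + 1 : Polynomial ℤ) ^ t * q).coeff m) (aux_poly h n hh)
  set P : Polynomial ℤ := (∑ i ∈ Finset.range h, (X : Polynomial ℤ) ^ i) ^ n with hP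
  have L : ((X + 1 : Polynomial ℤ) ^ t * ((X + 1) ^ h - 1) ^ n).coeff m
      = ∑ ν ∈ Finset.range (n + 1), (n.choose ν : ℤ) * (-1) ^ (n - ν) * ((t + ν * h).choose m : ℤ) := by
    rw [sub_pow, Finset.mul_sum, Polynomial.finset_sum_coeff]
    refine Finset.sum_congr rfl fun ν hν => ?_
    have e : (X + 1 : Polynomial ℤ) ^ t * ((-1) ^ (ν + n) * ((X + 1) ^ h) ^ ν * 1 ^ (n - ν) * (n.choose ν : Polynomial ℤ))
        = C ((-1 : ℤ) ^ (ν + n) * (n.choose ν : ℤ)) * (X + 1) ^ (t + ν * h) := by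
      have hC : (C ((-1 : ℤ) ^ (ν + n) * (n.choose ν : ℤ)) : Polynomial ℤ)
          = (-1) ^ (ν + n) * (n.choose ν : Polynomial ℤ) := by
        simp [map_mul, map_pow, map_neg, map_one, map_natCast]
      rw [hC, ← pow_mul, one_pow, mul_one]
      ring
    rw [e, Polynomial.coeff_C_mul, Polynomial.coeff_X_add_one_pow]
    have hs : (-1 : ℤ) ^ (ν + n) = (-1) ^ (n - ν) := by
      have hν' : ν ≤ n := Nat.lt_succ_iff.mp (Finset.mem_range.mp hν)
      rw [show ν + n = (n - ν) + 2 * ν by omega, pow_add, pow_mul]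
      simp
    rw [hs]; ring
  have R : ((X + 1 : Polynomial ℤ) ^ t *
        ((∑ ν ∈ Finset.range (n * (h - 1) + 1), C (P.coeff ν) * (X + 1) ^ ν) * X ^ n)).coeff m
      = ∑ ν ∈ Finset.range (n * (h - 1) + 1), P.coeff ν * ((t + ν).choose (m - n) : ℤ) := by
    have e : (X + 1 : Polynomial ℤ) ^ t *
        ((∑ ν ∈ Finset.range (n * (h - 1) + 1), C (P.coeff ν) * (X + 1) ^ ν) * X ^ n)
        = X ^ n * ∑ ν ∈ Finset.range (n * (h - 1) + 1), C (P.coeff ν) * (X + 1) ^ (t + ν) := by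
      rw [Finset.sum_mul, Finset.mul_sum, Finset.mul_sum]
      refine Finset.sum_congr rfl fun ν _ => ?_
      ring
    have e2 := Polynomial.coeff_X_pow_mul
      (∑ ν ∈ Finset.range (n * (h - 1) + 1), C (P.coeff ν) * (X + 1) ^ (t + ν)) n (m - n)
    rw [show m - n + n = m by omega] at e2
    rw [e, e2, Polynomial.finset_sum_coeff]
    refine Finset.sum_congr rfl fun ν _ => ?_
    rw [Polynomial.coeff_C_mul, Polynomial.coeff_X_add_one_pow]
  rw [L, R] at key
  exact key

lemma aux_dP (p : ℕ) [Fact p.Prime] (k : ℕ) (x : ℤ_[p]) :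
    (descPochhammer ℤ_[p] k).eval x = (k.factorial : ℤ_[p]) * Ring.choose x k := by
  rw [← descPochhammer_map (algebraMap ℤ ℤ_[p]) k, Polynomial.eval_map, ← Polynomial.aeval_def,
    Polynomial.aeval_eq_smeval, Ring.descPochhammer_eq_factorial_smul_choose, nsmul_eq_mul]

theorem stmt1 (p : ℕ) [Fact p.Prime] (h m n : ℕ) (hh : 0 < h) (hn : 0 < n) (hnm : n ≤ m)
    (c : ℕ → ℤ)
    (hc : ∀ ν, c ν = ((∑ i ∈ Finset.range h, (Polynomial.X : Polynomial ℤ) ^ i) ^ n).coeff ν) :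
    (∀ s : ℤ_[p],
        deltaH p h (fun x => binomC p x m) n s =
          ∑ ν ∈ Finset.range (n * (h - 1) + 1), (c ν : ℤ_[p]) * binomC p (s + (ν : ℤ_[p])) (m - n)) ∧
      ∑ ν ∈ Finset.range (n * (h - 1) + 1), c ν = (h : ℤ) ^ n := by
  constructor
  · set N := n * (h - 1) with hN
    set A : Polynomial ℤ_[p] := ∑ ν ∈ Finset.range (n + 1),
      Polynomial.C ((n.choose ν : ℤ_[p]) * (-1) ^ (n - ν)) *
        (descPochhammer ℤ_[p] m).comp (Polynomial.X + Polynomial.C ((ν : ℤ_[p]) * (h : ℤ_[p]))) with hA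
    set B : Polynomial ℤ_[p] := ∑ ν ∈ Finset.range (N + 1),
      Polynomial.C ((c ν : ℤ_[p]) * (m.descFactorial n : ℤ_[p])) *
        (descPochhammer ℤ_[p] (m - n)).comp (Polynomial.X + Polynomial.C (ν : ℤ_[p])) with hB
    have hfac : (m.descFactorial n : ℤ_[p]) * ((m - n).factorial : ℤ_[p]) = (m.factorial : ℤ_[p]) := by
      rw [← Nat.cast_mul, mul_comm, Nat.factorial_mul_descFactorial hnm]
    have evalA : ∀ x : ℤ_[p], A.eval x
        = (m.factorial : ℤ_[p]) * deltaH p h (fun y => binomC p y m) n x := by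
      intro x
      rw [hA]
      simp only [Polynomial.eval_finset_sum, Polynomial.eval_mul, Polynomial.eval_C,
        Polynomial.eval_comp, Polynomial.eval_add, Polynomial.eval_X, deltaH, binomC,
        Finset.mul_sum]
      refine Finset.sum_congr rfl fun ν _ => ?_
      rw [aux_dP]
      ring
    have evalB : ∀ x : ℤ_[p], B.eval x
        = (m.factorial : ℤ_[p]) *
            ∑ ν ∈ Finset.range (N + 1), (c ν : ℤ_[p]) * binomC p (x + (ν : ℤ_[p])) (m - n) := by
      intro x
      rw [hB]
      simp only [Polynomial.eval_finset_sum, Polynomial.eval_mul, Polynomial.eval_C,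
        Polynomial.eval_comp, Polynomial.eval_add, Polynomial.eval_X, binomC, Finset.mul_sum]
      refine Finset.sum_congr rfl fun ν _ => ?_
      rw [aux_dP, ← hfac]
      ring
    have hAB : A = B := by
      apply Polynomial.eq_of_infinite_eval_eq
      apply Set.infinite_of_injective_forall_mem (f := (Nat.cast : ℕ → ℤ_[p]))
        Nat.cast_injective
      intro t
      simp only [Set.mem_setOf_eq]
      rw [evalA, evalB]
      congr 1
      have key := congrArg (Int.cast : ℤ → ℤ_[p]) (aux_nat h m n hh hnm t)
      simp only [← hc] at key
      push_cast at key
      rw [deltaH]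
      simp only [binomC]
      calc ∑ ν ∈ Finset.range (n + 1),
            (n.choose ν : ℤ_[p]) * (-1) ^ (n - ν) *
              Ring.choose ((t : ℤ_[p]) + (ν : ℤ_[p]) * (h : ℤ_[p])) m
          = ∑ ν ∈ Finset.range (n + 1),
            (n.choose ν : ℤ_[p]) * (-1) ^ (n - ν) * (((t + ν * h).choose m : ℕ) : ℤ_[p]) := by
            refine Finset.sum_congr rfl fun ν _ => ?_
            rw [show (t : ℤ_[p]) + (ν : ℤ_[p]) * (h : ℤ_[p]) = ((t + ν * h : ℕ) : ℤ_[p]) by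
              push_cast; ring, Ring.choose_natCast]
        _ = ∑ ν ∈ Finset.range (N + 1), (c ν : ℤ_[p]) * (((t + ν).choose (m - n) : ℕ) : ℤ_[p]) := by
            exact_mod_cast key
        _ = ∑ ν ∈ Finset.range (N + 1), (c ν : ℤ_[p]) *
              Ring.choose ((t : ℤ_[p]) + (ν : ℤ_[p])) (m - n) := by
            refine Finset.sum_congr rfl fun ν _ => ?_
            rw [show (t : ℤ_[p]) + (ν : ℤ_[p]) = ((t + ν : ℕ) : ℤ_[p]) by push_cast; ring,
              Ring.choose_natCast]
    intro s
    have hev := congrArg (Polynomial.eval s) hAB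
    rw [evalA, evalB] at hev
    exact mul_left_cancel₀ (Nat.cast_ne_zero.mpr (Nat.factorial_ne_zero m)) hev
  · have hd := aux_deg h n
    have he := Polynomial.eval_eq_sum_range' hd (1 : ℤ)
    simp only [one_pow, mul_one] at he
    have hv : ((∑ i ∈ Finset.range h, (Polynomial.X : Polynomial ℤ) ^ i) ^ n).eval 1
        = (h : ℤ) ^ n := by
      simp [Polynomial.eval_pow, Polynomial.eval_finset_sum]
    rw [Finset.sum_congr rfl fun ν _ => hc ν, ← he, hv]
end

section
/- Let p be a prime and f : ℤ_p → ℤ_p a continuous function such that Δ^n f(0) ∈ p^n ℤ_p for every integer n ≥ 0. Then Δ^n f(s) ∈ p^n ℤ_p for every n ≥ 0 and every s ∈ ℤ_p; that is, f ∈ KS_{p,2}. -/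
open Finset

/-- `f ∈ KS_{p,2}`: `f` is continuous and satisfies the Kummer type congruences
`Δ^n f(s) ∈ p^n ℤ_p` for all integers `n ≥ 0` and all `s ∈ ℤ_p`. -/
def KS2 (p : ℕ) [Fact p.Prime] (f : ℤ_[p] → ℤ_[p]) : Prop :=
  Continuous f ∧ ∀ (n : ℕ) (s : ℤ_[p]), (p : ℤ_[p]) ^ n ∣ deltaH p 1 f n s

lemma deltaH_eq_fwdDiff (p : ℕ) [Fact p.Prime] (f : ℤ_[p] → ℤ_[p]) (n : ℕ) (s : ℤ_[p]) :
    deltaH p 1 f n s = (fwdDiff (1 : ℤ_[p]))^[n] f s := by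
  rw [fwdDiff_iter_eq_sum_shift, deltaH]
  refine Finset.sum_congr rfl fun k _ => ?_
  rw [zsmul_eq_mul, nsmul_eq_mul]
  push_cast
  ring

lemma fwdDiff_iter_succ' (p : ℕ) [Fact p.Prime] (f : ℤ_[p] → ℤ_[p]) (n : ℕ) (s : ℤ_[p]) :
    (fwdDiff (1 : ℤ_[p]))^[n] f (s + 1)
      = (fwdDiff (1 : ℤ_[p]))^[n] f s + (fwdDiff (1 : ℤ_[p]))^[n + 1] f s := by
  rw [Function.iterate_succ_apply', fwdDiff]
  ring

lemma continuous_fwdDiff_iter (p : ℕ) [Fact p.Prime] (f : ℤ_[p] → ℤ_[p]) (hf : Continuous f)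
    (n : ℕ) : Continuous ((fwdDiff (1 : ℤ_[p]))^[n] f) := by
  induction n with
  | zero => exact hf
  | succ n ih =>
      rw [Function.iterate_succ_apply']
      exact (ih.comp (continuous_id.add continuous_const)).sub ih

theorem stmt2 (p : ℕ) [Fact p.Prime] (f : ℤ_[p] → ℤ_[p]) (hf : Continuous f)
    (h0 : ∀ n : ℕ, (p : ℤ_[p]) ^ n ∣ deltaH p 1 f n 0) :
    KS2 p f := by
  refine ⟨hf, fun n s => ?_⟩
  rw [deltaH_eq_fwdDiff]
  -- divisibility at natural number points
  have hnat : ∀ (m n : ℕ), (p : ℤ_[p]) ^ n ∣ (fwdDiff (1 : ℤ_[p]))^[n] f (m : ℤ_[p]) := by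
    intro m
    induction m with
    | zero =>
        intro n
        simpa [deltaH_eq_fwdDiff] using h0 n
    | succ m ih =>
        intro n
        push_cast
        rw [fwdDiff_iter_succ']
        exact dvd_add (ih n) (dvd_trans (pow_dvd_pow _ (Nat.le_succ n)) (ih (n + 1)))
  -- the set where divisibility holds is closed
  have hclosed : IsClosed {x : ℤ_[p] | (p : ℤ_[p]) ^ n ∣ (fwdDiff (1 : ℤ_[p]))^[n] f x} := by
    have : {x : ℤ_[p] | (p : ℤ_[p]) ^ n ∣ (fwdDiff (1 : ℤ_[p]))^[n] f x}
        = {x : ℤ_[p] | ‖(fwdDiff (1 : ℤ_[p]))^[n] f x‖ ≤ (p : ℝ) ^ (-(n : ℤ))} := by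
      ext x
      rw [Set.mem_setOf_eq, Set.mem_setOf_eq, PadicInt.norm_le_pow_iff_mem_span_pow,
        Ideal.mem_span_singleton]
    rw [this]
    exact isClosed_le (continuous_norm.comp (continuous_fwdDiff_iter p f hf n)) continuous_const
  -- density argument
  have hdense : ∀ x : ℤ_[p], x ∈ {x : ℤ_[p] | (p : ℤ_[p]) ^ n ∣ (fwdDiff (1 : ℤ_[p]))^[n] f x} := by
    intro x
    have := PadicInt.denseRange_natCast (p := p)
    have hsub : Set.range (Nat.cast : ℕ → ℤ_[p])
        ⊆ {x : ℤ_[p] | (p : ℤ_[p]) ^ n ∣ (fwdDiff (1 : ℤ_[p]))^[n] f x} := by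
      rintro _ ⟨m, rfl⟩
      exact hnat m n
    have := hclosed.closure_subset_iff.mpr hsub
    have hx : x ∈ closure (Set.range (Nat.cast : ℕ → ℤ_[p])) :=
      (PadicInt.denseRange_natCast x)
    exact this hx
  exact hdense s
end

section
/- Let p be a prime and f ∈ KS_{p,2}. Then for all integers h ≥ 1, n ≥ 1 and all s ∈ ℤ_p one has v_p( Δ_h^n f(s) ) ≥ n·(1 + v_p(h)); that is, f also satisfies the Kummer type congruences with arbitrary increment (KS_{p,2} = KSS_{p,2}). -/
open Finset

variable {p : ℕ} [Fact p.Prime]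

noncomputable def myE (p : ℕ) [Fact p.Prime] (h : ℕ) (g : ℤ_[p] → ℤ_[p]) (n : ℕ)
    (s : ℤ_[p]) : ℤ_[p] :=
  ∑ ν ∈ Finset.range (n + 1),
    (n.choose ν : ℤ_[p]) * (-1) ^ ν * g (s + (ν : ℤ_[p]) * (h : ℤ_[p]))

lemma myE_zero (h : ℕ) (g : ℤ_[p] → ℤ_[p]) (s : ℤ_[p]) : myE p h g 0 s = g s := by
  simp [myE]

lemma myE_one (h : ℕ) (g : ℤ_[p] → ℤ_[p]) (s : ℤ_[p]) :
    myE p h g 1 s = g s - g (s + h) := by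
  simp [myE, Finset.sum_range_succ]
  ring

lemma myE_succ (h k : ℕ) (g : ℤ_[p] → ℤ_[p]) (s : ℤ_[p]) :
    myE p h g (k+1) s = myE p h g k s - myE p h g k (s + h) := by
  simp only [myE]
  rw [Finset.sum_range_succ' (fun ν => ((k+1).choose ν : ℤ_[p]) * (-1) ^ ν * g (s + (ν : ℤ_[p]) * (h : ℤ_[p])))]
  simp only [Nat.choose_succ_succ]
  push_cast
  simp only [add_mul, Finset.sum_add_distrib]
  have hA : ∑ i ∈ Finset.range (k+1),
      ((k.choose i : ℤ_[p])) * (-1) ^ (i+1) * g (s + ((i:ℤ_[p])+1) * (h:ℤ_[p]))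
      = - myE p h g k (s + h) := by
    rw [myE, ← Finset.sum_neg_distrib]
    refine Finset.sum_congr rfl fun i _ => ?_
    ring_nf
  have hB : (∑ i ∈ Finset.range (k+1),
      ((k.choose (i+1) : ℤ_[p])) * (-1) ^ (i+1) * g (s + ((i:ℤ_[p])+1) * (h:ℤ_[p])))
      + g s = myE p h g k s := by
    rw [Finset.sum_range_succ, myE,
      Finset.sum_range_succ' (fun ν => ((k.choose ν : ℤ_[p])) * (-1) ^ ν * g (s + (ν : ℤ_[p]) * (h : ℤ_[p])))]
    simp [Nat.choose_succ_self]
  have e1 : ∑ x ∈ Finset.range (k+1), ((k.choose x : ℤ_[p])) * (-1) ^ (x+1) * g (s + ((x:ℤ_[p]) * h + 1 * h))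
      = ∑ i ∈ Finset.range (k+1), ((k.choose i : ℤ_[p])) * (-1) ^ (i+1) * g (s + ((i:ℤ_[p])+1) * h) :=
    Finset.sum_congr rfl fun i _ => by rw [show s + ((i:ℤ_[p]) * h + 1 * h) = s + ((i:ℤ_[p])+1) * h by ring]
  have e2 : ∑ x ∈ Finset.range (k+1), ((k.choose x.succ : ℤ_[p])) * (-1) ^ (x+1) * g (s + ((x:ℤ_[p]) * h + 1 * h))
      = ∑ i ∈ Finset.range (k+1), ((k.choose (i+1) : ℤ_[p])) * (-1) ^ (i+1) * g (s + ((i:ℤ_[p])+1) * h) :=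
    Finset.sum_congr rfl fun i _ => by rw [show s + ((i:ℤ_[p]) * h + 1 * h) = s + ((i:ℤ_[p])+1) * h by ring]
  rw [e1, e2, hA]
  simp only [myE] at hB ⊢
  simp only [Nat.choose_zero_right, Nat.cast_one, pow_zero, one_mul, zero_mul, add_zero]
  linear_combination hB

lemma myE_shift (h k : ℕ) (g : ℤ_[p] → ℤ_[p]) (s a : ℤ_[p]) :
    myE p h g k (s + a) = myE p h (fun t => g (t + a)) k s :=
  Finset.sum_congr rfl fun ν _ => by
    rw [show s + a + (ν:ℤ_[p]) * h = s + (ν:ℤ_[p]) * h + a by ring]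

lemma myE_sub (h k : ℕ) (g₁ g₂ : ℤ_[p] → ℤ_[p]) (s : ℤ_[p]) :
    myE p h (fun t => g₁ t - g₂ t) k s = myE p h g₁ k s - myE p h g₂ k s := by
  simp [myE, mul_sub, Finset.sum_sub_distrib]

lemma myE_succ' (k : ℕ) (g : ℤ_[p] → ℤ_[p]) (s : ℤ_[p]) :
    myE p 1 g (k+1) s = myE p 1 (fun t => g t - g (t + 1)) k s := by
  rw [myE_succ, myE_sub, myE_shift]
  norm_num

lemma myE_comp (j m : ℕ) (g : ℤ_[p] → ℤ_[p]) (s : ℤ_[p]) :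
    myE p 1 (fun t => myE p 1 g j t) m s = myE p 1 g (m + j) s := by
  induction j generalizing g s with
  | zero =>
    have : (fun t => myE p 1 g 0 t) = g := funext fun t => myE_zero 1 g t
    rw [this, add_zero]
  | succ j ih =>
    have hfun : (fun t => myE p 1 g (j+1) t)
        = (fun t => myE p 1 (fun u => g u - g (u + 1)) j t) :=
      funext fun t => myE_succ' j g t
    rw [hfun, ih, show m + (j+1) = (m+j)+1 by ring, myE_succ']

lemma myE_sum {ι : Type*} (T : Finset ι) (a : ι → ℤ_[p]) (F : ι → ℤ_[p] → ℤ_[p])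
    (m : ℕ) (s : ℤ_[p]) :
    myE p 1 (fun t => ∑ j ∈ T, a j * F j t) m s = ∑ j ∈ T, a j * myE p 1 (F j) m s := by
  simp only [myE, Finset.mul_sum]
  rw [Finset.sum_comm]
  exact Finset.sum_congr rfl fun j _ => Finset.sum_congr rfl fun ν _ => by ring

lemma newton (h : ℕ) (g : ℤ_[p] → ℤ_[p]) (s : ℤ_[p]) :
    g (s + (h:ℤ_[p])) = ∑ j ∈ Finset.range (h+1),
      (h.choose j : ℤ_[p]) * (-1) ^ j * myE p 1 g j s := by
  induction h generalizing s with
  | zero => simp [myE_zero]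
  | succ h ih =>
    rw [Finset.sum_range_succ' (fun j => ((h+1).choose j : ℤ_[p]) * (-1) ^ j * myE p 1 g j s)]
    simp only [Nat.choose_succ_succ]
    push_cast
    simp only [add_mul, Finset.sum_add_distrib]
    have hA : ∑ i ∈ Finset.range (h+1),
        ((h.choose i : ℤ_[p])) * (-1) ^ (i+1) * myE p 1 g (i+1) s
        = - g (s + h) + g (s + 1 + h) := by
      have : ∀ i, myE p 1 g (i+1) s = myE p 1 g i s - myE p 1 g i (s+1) := fun i => by
        have := myE_succ 1 i g s; rwa [Nat.cast_one] at this
      simp only [this, mul_sub, Finset.sum_sub_distrib]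
      rw [ih s, ih (s+1)]
      have l1 : ∑ i ∈ Finset.range (h+1), ((h.choose i : ℤ_[p])) * (-1) ^ (i+1) * myE p 1 g i s
          = - ∑ j ∈ Finset.range (h+1), ((h.choose j : ℤ_[p])) * (-1) ^ j * myE p 1 g j s := by
        rw [← Finset.sum_neg_distrib]
        exact Finset.sum_congr rfl fun i _ => by ring
      have l2 : ∑ i ∈ Finset.range (h+1), ((h.choose i : ℤ_[p])) * (-1) ^ (i+1) * myE p 1 g i (s+1)
          = - ∑ j ∈ Finset.range (h+1), ((h.choose j : ℤ_[p])) * (-1) ^ j * myE p 1 g j (s+1) := by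
        rw [← Finset.sum_neg_distrib]
        exact Finset.sum_congr rfl fun i _ => by ring
      rw [l1, l2]
      ring
    have hB : (∑ i ∈ Finset.range (h+1),
        ((h.choose (i+1) : ℤ_[p])) * (-1) ^ (i+1) * myE p 1 g (i+1) s)
        + g s = g (s + h) := by
      rw [ih s, Finset.sum_range_succ,
        Finset.sum_range_succ' (fun j => ((h.choose j : ℤ_[p])) * (-1) ^ j * myE p 1 g j s)]
      simp [Nat.choose_succ_self, myE_zero]
    rw [hA]
    simp only [Nat.succ_eq_add_one, Nat.choose_zero_right, Nat.cast_one, pow_zero, one_mul,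
      myE_zero]
    rw [show s + ((h:ℤ_[p]) + 1) = s + 1 + h by ring]
    linear_combination -hB

omit [Fact p.Prime] in
lemma padicValNat_lt_self {j : ℕ} (hp : p.Prime) (hj : 1 ≤ j) : padicValNat p j < j := by
  have h1 : p ^ padicValNat p j ∣ j := pow_padicValNat_dvd
  have h2 : p ^ padicValNat p j ≤ j := Nat.le_of_dvd (by omega) h1
  have h3 : padicValNat p j < 2 ^ padicValNat p j := Nat.lt_two_pow_self
  have h4 : 2 ^ padicValNat p j ≤ p ^ padicValNat p j :=
    Nat.pow_le_pow_left hp.two_le _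
  omega

lemma key_nat (hp : p.Prime) (h j : ℕ) (hh : 1 ≤ h) (hj : 1 ≤ j) :
    p ^ (1 + padicValNat p h) ∣ h.choose j * p ^ j := by
  rcases le_or_gt j h with hjh | hjh
  · have hC : 0 < h.choose j := Nat.choose_pos hjh
    obtain ⟨h', rfl⟩ : ∃ h', h = h'+1 := ⟨h-1, by omega⟩
    obtain ⟨j', rfl⟩ : ∃ j', j = j'+1 := ⟨j-1, by omega⟩
    have e : (h'+1) * (h'.choose j') = (h'+1).choose (j'+1) * (j'+1) :=
      Nat.add_one_mul_choose_eq h' j'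
    have hC' : 0 < h'.choose j' := Nat.choose_pos (by omega)
    have hv := congrArg (padicValNat p) e
    rw [padicValNat.mul (by omega) (by omega), padicValNat.mul (by omega) (by omega)] at hv
    have hvj : padicValNat p (j'+1) < j'+1 := padicValNat_lt_self hp (by omega)
    have hle : 1 + padicValNat p (h'+1)
        ≤ padicValNat p ((h'+1).choose (j'+1)) + (j'+1) := by omega
    calc p ^ (1 + padicValNat p (h'+1))
        ∣ p ^ (padicValNat p ((h'+1).choose (j'+1)) + (j'+1)) := pow_dvd_pow p hle
      _ = p ^ padicValNat p ((h'+1).choose (j'+1)) * p ^ (j'+1) := pow_add p _ _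
      _ ∣ (h'+1).choose (j'+1) * p ^ (j'+1) :=
          mul_dvd_mul pow_padicValNat_dvd dvd_rfl
  · simp [Nat.choose_eq_zero_of_lt hjh]

lemma key_padic (h j : ℕ) (hh : 1 ≤ h) (hj : 1 ≤ j) :
    (p : ℤ_[p]) ^ (1 + padicValNat p h) ∣ (h.choose j : ℤ_[p]) * (p : ℤ_[p]) ^ j := by
  have := key_nat (Fact.out : p.Prime) h j hh hj
  have := Nat.cast_dvd_cast (α := ℤ_[p]) this
  push_cast at this
  exact this

/-- The key step: applying `Δ_h` gains `1 + v_p(h)` powers of `p`. -/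
lemma step_lemma (h : ℕ) (hh : 1 ≤ h) (c : ℕ) (g : ℤ_[p] → ℤ_[p])
    (hg : ∀ (m : ℕ) (s : ℤ_[p]), (p : ℤ_[p]) ^ (c + m) ∣ myE p 1 g m s) :
    ∀ (m : ℕ) (s : ℤ_[p]), (p : ℤ_[p]) ^ ((c + (1 + padicValNat p h)) + m)
      ∣ myE p 1 (fun t => myE p h g 1 t) m s := by
  intro m s
  -- rewrite the inner function
  have hfun : (fun t => myE p h g 1 t) = (fun t => g t - g (t + (h:ℤ_[p]))) :=
    funext fun t => myE_one h g t
  rw [hfun, myE_sub, ← myE_shift]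
  -- Newton applied to the function `u ↦ myE p 1 g m u`
  have hnewt := newton (p := p) h (fun u => myE p 1 g m u) s
  rw [hnewt]
  -- peel off the j = 0 term
  rw [Finset.sum_range_succ' (fun j => ((h.choose j : ℤ_[p])) * (-1) ^ j
      * myE p 1 (fun u => myE p 1 g m u) j s)]
  simp only [Nat.choose_zero_right, Nat.cast_one, pow_zero, one_mul, myE_zero]
  rw [show ∀ a b : ℤ_[p], a - (b + a) = -b by intros; ring]
  rw [dvd_neg]
  refine Finset.dvd_sum fun i _ => ?_
  rw [myE_comp (p := p) m (i+1) g s]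
  obtain ⟨u, hu⟩ := hg (i + 1 + m) s
  rw [hu]
  have hk := key_padic (p := p) h (i+1) hh (by omega)
  obtain ⟨w, hw⟩ := hk
  refine ⟨w * ((-1) ^ (i+1) * u), ?_⟩
  calc ((h.choose (i+1) : ℤ_[p])) * (-1) ^ (i+1) * ((p:ℤ_[p]) ^ (c + (i + 1 + m)) * u)
      = ((h.choose (i+1) : ℤ_[p]) * (p:ℤ_[p]) ^ (i+1)) * ((-1) ^ (i+1) * (p:ℤ_[p]) ^ (c + m) * u) := by
        rw [show c + (i + 1 + m) = (i+1) + (c + m) by ring, pow_add]; ring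
    _ = (p:ℤ_[p]) ^ (1 + padicValNat p h) * w * ((-1) ^ (i+1) * (p:ℤ_[p]) ^ (c + m) * u) := by
        rw [hw]
    _ = (p:ℤ_[p]) ^ ((c + (1 + padicValNat p h)) + m) * (w * ((-1) ^ (i+1) * u)) := by
        rw [show (c + (1 + padicValNat p h)) + m = (1 + padicValNat p h) + (c + m) by ring,
          pow_add]; ring

lemma deltaH_eq_myE (h n : ℕ) (g : ℤ_[p] → ℤ_[p]) (s : ℤ_[p]) :
    deltaH p h g n s = (-1) ^ n * myE p h g n s := by
  rw [myE, deltaH, Finset.mul_sum]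
  refine Finset.sum_congr rfl fun ν hν => ?_
  have hν' : ν ≤ n := by simp only [Finset.mem_range] at hν; omega
  have h2 : ((-1:ℤ_[p])^ν) * ((-1:ℤ_[p])^ν) = 1 := by rw [← mul_pow]; norm_num
  have h3 : (-1:ℤ_[p])^(n-ν) = (-1)^n * (-1)^ν := by
    calc (-1:ℤ_[p])^(n-ν) = (-1)^(n-ν) * ((-1)^ν*(-1)^ν) := by rw [h2, mul_one]
      _ = ((-1)^(n-ν)*(-1)^ν)*(-1)^ν := by ring
      _ = (-1)^n * (-1)^ν := by rw [← pow_add, Nat.sub_add_cancel hν']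
  rw [h3]; ring

theorem stmt3_aux (f : ℤ_[p] → ℤ_[p])
    (hf : ∀ (n : ℕ) (s : ℤ_[p]), (p : ℤ_[p]) ^ n ∣ deltaH p 1 f n s) :
    ∀ (h n : ℕ), 1 ≤ h → 1 ≤ n → ∀ s : ℤ_[p],
      (p : ℤ_[p]) ^ (n * (1 + padicValNat p h)) ∣ deltaH p h f n s := by
  intro h n hh _hn s
  set v := padicValNat p h with hv
  have base : ∀ (m : ℕ) (s : ℤ_[p]), (p : ℤ_[p]) ^ (0 + m) ∣ myE p 1 f m s := by
    intro m s
    have e : myE p 1 f m s = (-1)^m * deltaH p 1 f m s := by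
      rw [deltaH_eq_myE, ← mul_assoc, ← mul_pow]; norm_num
    rw [zero_add, e]
    exact (hf m s).mul_left _
  have claim : ∀ (n m : ℕ) (s : ℤ_[p]), (p : ℤ_[p]) ^ (n * (1 + v) + m)
      ∣ myE p 1 (fun t => myE p h f n t) m s := by
    intro n
    induction n with
    | zero =>
      intro m s
      have e : (fun t => myE p h f 0 t) = f := funext fun t => myE_zero h f t
      rw [e, zero_mul]
      exact base m s
    | succ n ih =>
      intro m s
      have e : (fun t => myE p h f (n+1) t)
          = (fun t => myE p h (fun u => myE p h f n u) 1 t) := by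
        funext t
        rw [myE_succ, myE_one]
      rw [e, show (n+1) * (1 + v) + m = ((n * (1+v)) + (1 + v)) + m by ring]
      exact step_lemma h hh (n * (1+v)) (fun u => myE p h f n u) ih m s
  have final := claim n 0 s
  have e0 : myE p 1 (fun t => myE p h f n t) 0 s = myE p h f n s := myE_zero 1 _ s
  rw [e0, add_zero] at final
  rw [deltaH_eq_myE]
  exact final.mul_left _

theorem stmt3 (p : ℕ) [Fact p.Prime] (f : ℤ_[p] → ℤ_[p]) (hf : KS2 p f) :
    ∀ (h n : ℕ), 1 ≤ h → 1 ≤ n → ∀ s : ℤ_[p],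
      (p : ℤ_[p]) ^ (n * (1 + padicValNat p h)) ∣ deltaH p h f n s :=
  stmt3_aux f hf.2
end

section
/- Let p be a prime and f ∈ KS_{p,2}. Then for all s, t ∈ ℤ_p one has ‖f(s) − f(t)‖_p ≤ p^{−1}·‖s − t‖_p. In particular, s ≡ t (mod p^n ℤ_p) implies f(s) ≡ f(t) (mod p^{n+1} ℤ_p), i.e. f satisfies the Kummer congruences (KS_{p,2} ⊆ KS_{p,1}). -/
open Finset

lemma deltaH_one_eq (p : ℕ) [Fact p.Prime] (f : ℤ_[p] → ℤ_[p]) (n : ℕ) (s : ℤ_[p]) :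
    deltaH p 1 f n s = (fwdDiff (1:ℤ_[p]))^[n] f s := by
  rw [deltaH, fwdDiff_iter_eq_sum_shift]
  refine Finset.sum_congr rfl fun ν _ => ?_
  rw [zsmul_eq_mul, nsmul_eq_mul]
  push_cast
  ring_nf

lemma nat_choose_dvd (p n m j : ℕ) (hp : p.Prime) (hm : p ^ n ∣ m) (hm0 : m ≠ 0)
    (hj : 1 ≤ j) (hjm : j ≤ m) : p ^ (n + 1) ∣ m.choose j * p ^ j := by
  have hc0 : m.choose j ≠ 0 := (Nat.choose_pos hjm).ne'
  have hj0 : j ≠ 0 := Nat.one_le_iff_ne_zero.mp hj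
  -- m ∣ j * choose m j
  have key : m ∣ m.choose j * j := by
    obtain ⟨m', rfl⟩ := Nat.exists_eq_succ_of_ne_zero hm0
    obtain ⟨j', rfl⟩ := Nat.exists_eq_succ_of_ne_zero hj0
    exact ⟨m'.choose j', (Nat.add_one_mul_choose_eq m' j').symm⟩
  have hpn : p ^ n ∣ m.choose j * j := hm.trans key
  have hne : m.choose j * j ≠ 0 := Nat.mul_ne_zero hc0 hj0
  have h1 : n ≤ (m.choose j * j).factorization p :=
    (Nat.Prime.pow_dvd_iff_le_factorization hp hne).mp hpn
  rw [Nat.factorization_mul hc0 hj0, Finsupp.add_apply] at h1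
  have h2 : (j.factorization p) + 1 ≤ j := by
    have hle : p ^ (j.factorization p) ≤ j := Nat.le_of_dvd hj (Nat.ordProj_dvd j p)
    have := Nat.lt_pow_self (n := j.factorization p) hp.one_lt
    omega
  refine (Nat.Prime.pow_dvd_iff_le_factorization hp
    (Nat.mul_ne_zero hc0 (pow_ne_zero j hp.pos.ne'))).mpr ?_
  rw [Nat.factorization_mul hc0 (pow_ne_zero j hp.pos.ne'), Finsupp.add_apply,
    Nat.Prime.factorization_pow hp, Finsupp.single_eq_same]
  omega

lemma shift_dvd (p : ℕ) [hp : Fact p.Prime] (f : ℤ_[p] → ℤ_[p])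
    (hf : ∀ (k : ℕ) (s : ℤ_[p]), (p : ℤ_[p]) ^ k ∣ (fwdDiff (1:ℤ_[p]))^[k] f s)
    (n m : ℕ) (s : ℤ_[p]) (hm : p ^ n ∣ m) :
    (p : ℤ_[p]) ^ (n + 1) ∣ f (s + m) - f s := by
  rcases Nat.eq_zero_or_pos m with rfl | hm0
  · simp
  have hshift := shift_eq_sum_fwdDiff_iter (1 : ℤ_[p]) f m s
  rw [Finset.sum_range_succ'] at hshift
  simp only [Nat.choose_zero_right, Function.iterate_zero, id_eq, one_smul] at hshift
  have heq : f (s + m) - f s = ∑ k ∈ Finset.range m, m.choose (k + 1) • (fwdDiff (1:ℤ_[p]))^[k+1] f s := by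
    have : s + (m : ℤ_[p]) = s + m • (1 : ℤ_[p]) := by simp
    rw [this, hshift]; ring
  rw [heq]
  refine Finset.dvd_sum fun k hk => ?_
  obtain ⟨u, hu⟩ := hf (k + 1) s
  have hdvd : p ^ (n + 1) ∣ m.choose (k + 1) * p ^ (k + 1) :=
    nat_choose_dvd p n m (k + 1) hp.out hm hm0.ne' (Nat.succ_le_succ (Nat.zero_le k))
      (Nat.succ_le_of_lt (Finset.mem_range.mp hk))
  obtain ⟨c, hc⟩ := hdvd
  refine ⟨(c : ℤ_[p]) * u, ?_⟩
  rw [nsmul_eq_mul, hu, ← mul_assoc]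
  have : (m.choose (k + 1) : ℤ_[p]) * (p : ℤ_[p]) ^ (k + 1) = ((m.choose (k+1) * p ^ (k+1) : ℕ) : ℤ_[p]) := by
    push_cast; ring
  rw [this, hc]
  push_cast; ring

lemma dvd_iff_norm_le (p : ℕ) [Fact p.Prime] (k : ℕ) (x : ℤ_[p]) :
    (p : ℤ_[p]) ^ k ∣ x ↔ ‖x‖ ≤ (p : ℝ) ^ (-(k : ℤ)) := by
  rw [PadicInt.norm_le_pow_iff_mem_span_pow, Ideal.mem_span_singleton]

theorem stmt4 (p : ℕ) [Fact p.Prime] (f : ℤ_[p] → ℤ_[p]) (hf : KS2 p f) :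
    (∀ s t : ℤ_[p], ‖f s - f t‖ ≤ (p : ℝ)⁻¹ * ‖s - t‖) ∧
      ∀ (n : ℕ) (s t : ℤ_[p]),
        (p : ℤ_[p]) ^ n ∣ s - t → (p : ℤ_[p]) ^ (n + 1) ∣ f s - f t := by
  have hp1 : (1 : ℝ) < (p : ℝ) := by exact_mod_cast (Fact.out : p.Prime).one_lt
  have hp0 : (0 : ℝ) < (p : ℝ) := lt_trans one_pos hp1
  have hfd : ∀ (k : ℕ) (s : ℤ_[p]), (p : ℤ_[p]) ^ k ∣ (fwdDiff (1:ℤ_[p]))^[k] f s := by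
    intro k s
    rw [← deltaH_one_eq]
    exact hf.2 k s
  have main : ∀ (n : ℕ) (s t : ℤ_[p]),
      (p : ℤ_[p]) ^ n ∣ s - t → (p : ℤ_[p]) ^ (n + 1) ∣ f s - f t := by
    intro n s t hst
    rw [dvd_iff_norm_le]
    have hε : (0 : ℝ) < (p : ℝ) ^ (-(n + 1 : ℕ) : ℤ) := zpow_pos hp0 _
    obtain ⟨δ, hδ0, hδ⟩ := Metric.continuous_iff.mp hf.1 s _ hε
    have hmin : (0 : ℝ) < min δ ((p : ℝ) ^ (-(n : ℤ))) :=
      lt_min hδ0 (zpow_pos hp0 _)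
    obtain ⟨m, hm⟩ := PadicInt.denseRange_natCast.exists_dist_lt (s - t) hmin
    have hdist : dist ((t + m : ℤ_[p])) s = ‖(m : ℤ_[p]) - (s - t)‖ := by
      rw [dist_eq_norm]; congr 1; ring
    have hmdist : ‖(m : ℤ_[p]) - (s - t)‖ < min δ ((p : ℝ) ^ (-(n : ℤ))) := by
      rw [dist_eq_norm] at hm
      rwa [norm_sub_rev] at hm
    -- p^n ∣ m
    have hmdvd : (p : ℤ_[p]) ^ n ∣ (m : ℤ_[p]) := by
      rw [dvd_iff_norm_le]
      have : (m : ℤ_[p]) = ((m : ℤ_[p]) - (s - t)) + (s - t) := by ring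
      rw [this]
      refine le_trans (PadicInt.nonarchimedean _ _) (max_le ?_ ?_)
      · exact le_of_lt (lt_of_lt_of_le hmdist (min_le_right _ _))
      · exact (dvd_iff_norm_le p n _).mp hst
    have hmnat : p ^ n ∣ m := by
      have := (PadicInt.pow_p_dvd_int_iff (p := p) n (m : ℤ)).mp (by exact_mod_cast hmdvd)
      exact_mod_cast this
    have h1 : ‖f (t + m) - f t‖ ≤ (p : ℝ) ^ (-(n + 1 : ℕ) : ℤ) :=
      (dvd_iff_norm_le p (n + 1) _).mp (shift_dvd p f hfd n m t hmnat)
    have h2 : ‖f (t + m) - f s‖ < (p : ℝ) ^ (-(n + 1 : ℕ) : ℤ) := by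
      have := hδ (t + m) (by rw [hdist]; exact lt_of_lt_of_le hmdist (min_le_left _ _))
      rwa [dist_eq_norm] at this
    have : f s - f t = -(f (t + m) - f s) + (f (t + m) - f t) := by ring
    rw [this]
    refine le_trans (PadicInt.nonarchimedean _ _) (max_le ?_ h1)
    rw [norm_neg]
    exact le_of_lt h2
  refine ⟨?_, main⟩
  intro s t
  rcases eq_or_ne s t with rfl | hst
  · simp [mul_nonneg (inv_nonneg.mpr hp0.le) (norm_nonneg _)]
  have hne : s - t ≠ 0 := sub_ne_zero.mpr hst
  set n : ℕ := (s - t).valuation with hn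
  have hval : ((n : ℤ)) = (s - t).valuation := rfl
  have hnorm : ‖s - t‖ = (p : ℝ) ^ (-(n : ℤ)) := by
    rw [PadicInt.norm_eq_zpow_neg_valuation hne]
  have hdvd : (p : ℤ_[p]) ^ n ∣ s - t := by
    rw [dvd_iff_norm_le, hnorm]
  have := (dvd_iff_norm_le p (n + 1) _).mp (main n s t hdvd)
  refine le_trans this (le_of_eq ?_)
  rw [hnorm, ← zpow_neg_one, ← zpow_add₀ hp0.ne']
  congr 1
  push_cast
  ring
end

section
/- Let p be a prime and f ∈ KS_{p,2}. Then for every integer n ≥ 0 and every s ∈ ℤ_p: f(s) ≡ Σ_{ν=0}^n f(ν)·C(s,ν)·C(n−s, n−ν) (mod p^{n+1} ℤ_p), where the binomial polynomials are evaluated at s and at n−s in ℤ_p. -/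
open Finset

section helpers

variable {p : ℕ} [Fact p.Prime]

lemma desc_reflect (z : ℤ_[p]) (t : ℕ) :
    (descPochhammer ℤ t).smeval z
      = (-1) ^ t * (descPochhammer ℤ t).smeval ((t : ℤ_[p]) - 1 - z) := by
  rw [Polynomial.descPochhammer_smeval_eq_ascPochhammer]
  have h : z - (t : ℤ_[p]) + 1 = -((t : ℤ_[p]) - 1 - z) := by ring
  rw [h, Polynomial.ascPochhammer_smeval_neg_eq_descPochhammer]
  simp [Units.smul_def, Int.coe_negOnePow_natCast, zsmul_eq_mul]

lemma choose_reflect (z : ℤ_[p]) (t : ℕ) :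
    Ring.choose z t = (-1) ^ t * Ring.choose ((t : ℤ_[p]) - 1 - z) t := by
  apply nsmul_right_injective t.factorial_ne_zero
  show t.factorial • Ring.choose z t
      = t.factorial • ((-1) ^ t * Ring.choose ((t : ℤ_[p]) - 1 - z) t)
  rw [← Ring.descPochhammer_eq_factorial_smul_choose, desc_reflect,
    Ring.descPochhammer_eq_factorial_smul_choose, mul_smul_comm]

lemma alt_sum (z : ℤ_[p]) : ∀ t : ℕ,
    ∑ j ∈ Finset.range (t + 1), (-1) ^ j * Ring.choose z j
      = (-1) ^ t * Ring.choose (z - 1) t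
  | 0 => by simp
  | (t + 1) => by
    rw [Finset.sum_range_succ, alt_sum z t]
    have h := Ring.choose_succ_succ (z - 1) t
    rw [sub_add_cancel] at h
    rw [h]
    ring

lemma term_eq (m ν j : ℕ) :
    ((m.choose (ν + j) : ℤ_[p])) * (((ν + j).choose ν : ℤ_[p]))
      = (m.choose ν : ℤ_[p]) * Ring.choose ((m : ℤ_[p]) - ν) j := by
  rcases le_or_gt ν m with h | h
  · have hcast : (m : ℤ_[p]) - ν = ((m - ν : ℕ) : ℤ_[p]) := by
      rw [Nat.cast_sub h]
    rw [hcast, Ring.choose_natCast, ← Nat.cast_mul, ← Nat.cast_mul]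
    congr 1
    rcases le_or_gt (ν + j) m with h2 | h2
    · have h3 := Nat.choose_mul (n := m) (Nat.le_add_right ν j)
      rw [h3, Nat.add_sub_cancel_left]
    · rw [Nat.choose_eq_zero_of_lt h2, Nat.choose_eq_zero_of_lt (by omega : m - ν < j),
        zero_mul, mul_zero]
  · rw [Nat.choose_eq_zero_of_lt (by omega : m < ν + j),
      Nat.choose_eq_zero_of_lt h, Nat.cast_zero, zero_mul, zero_mul]

lemma starSum (m n ν : ℕ) (hν : ν ≤ n) :
    ∑ k ∈ Finset.Ico ν (n + 1),
        (m.choose k : ℤ_[p]) * ((k.choose ν : ℤ_[p]) * (-1) ^ (k - ν))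
      = (m.choose ν : ℤ_[p]) * Ring.choose ((n : ℤ_[p]) - m) (n - ν) := by
  rw [Finset.sum_Ico_eq_sum_range]
  have hr : n + 1 - ν = (n - ν) + 1 := by omega
  rw [hr]
  have hterm : ∀ j : ℕ,
      (m.choose (ν + j) : ℤ_[p]) * (((ν + j).choose ν : ℤ_[p]) * (-1) ^ (ν + j - ν))
        = (m.choose ν : ℤ_[p]) * ((-1) ^ j * Ring.choose ((m : ℤ_[p]) - ν) j) := by
    intro j
    have h2 : ν + j - ν = j := by omega
    rw [h2]
    have h3 := term_eq (p := p) m ν j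
    linear_combination ((-1 : ℤ_[p])) ^ j * h3
  rw [Finset.sum_congr rfl (fun j _ => hterm j), ← Finset.mul_sum,
    alt_sum ((m : ℤ_[p]) - (ν : ℤ_[p])) (n - ν)]
  congr 1
  rw [choose_reflect ((n : ℤ_[p]) - (m : ℤ_[p])) (n - ν)]
  congr 2
  rw [Nat.cast_sub hν]
  ring

lemma deltaH_zero (f : ℤ_[p] → ℤ_[p]) (k : ℕ) :
    deltaH p 1 f k 0
      = ∑ ν ∈ Finset.range (k + 1), (k.choose ν : ℤ_[p]) * (-1) ^ (k - ν) * f ν := by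
  simp [deltaH]

lemma key (f : ℤ_[p] → ℤ_[p]) (n m : ℕ) :
    ∑ k ∈ Finset.range (n + 1), (m.choose k : ℤ_[p]) * deltaH p 1 f k 0
      = ∑ ν ∈ Finset.range (n + 1),
          f ν * Ring.choose (m : ℤ_[p]) ν * Ring.choose ((n : ℤ_[p]) - m) (n - ν) := by
  have step1 : ∑ k ∈ Finset.range (n + 1), (m.choose k : ℤ_[p]) * deltaH p 1 f k 0
      = ∑ k ∈ Finset.range (n + 1), ∑ ν ∈ Finset.range (n + 1),
          if ν ≤ k then
            (m.choose k : ℤ_[p]) * ((k.choose ν : ℤ_[p]) * (-1) ^ (k - ν)) * f ν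
          else 0 := by
    refine Finset.sum_congr rfl fun k hk => ?_
    rw [deltaH_zero, Finset.mul_sum]
    have hsub : Finset.range (k + 1) ⊆ Finset.range (n + 1) := by
      apply Finset.range_subset_range.mpr
      simp only [Finset.mem_range] at hk
      omega
    rw [← Finset.sum_subset hsub (by
      intro x hx hx2
      simp only [Finset.mem_range] at hx2
      rw [if_neg (by omega)])]
    refine Finset.sum_congr rfl fun ν hν => ?_
    simp only [Finset.mem_range] at hν
    rw [if_pos (by omega)]
    ring
  rw [step1, Finset.sum_comm]
  refine Finset.sum_congr rfl fun ν hν => ?_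
  simp only [Finset.mem_range] at hν
  have hsub : Finset.Ico ν (n + 1) ⊆ Finset.range (n + 1) := by
    rw [Finset.range_eq_Ico]
    exact Finset.Ico_subset_Ico (Nat.zero_le ν) le_rfl
  rw [← Finset.sum_subset hsub (by
    intro x hx hx2
    simp only [Finset.mem_Ico, Finset.mem_range] at hx hx2
    rw [if_neg (by omega)])]
  have : ∑ k ∈ Finset.Ico ν (n + 1),
      (if ν ≤ k then (m.choose k : ℤ_[p]) * ((k.choose ν : ℤ_[p]) * (-1) ^ (k - ν)) * f ν else 0)
      = (∑ k ∈ Finset.Ico ν (n + 1),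
          (m.choose k : ℤ_[p]) * ((k.choose ν : ℤ_[p]) * (-1) ^ (k - ν))) * f ν := by
    rw [Finset.sum_mul]
    refine Finset.sum_congr rfl fun k hk => ?_
    simp only [Finset.mem_Ico] at hk
    rw [if_pos hk.1]
  rw [this, starSum m n ν (by omega), Ring.choose_natCast]
  ring

lemma newton_s6 (f : ℤ_[p] → ℤ_[p]) (m : ℕ) :
    f (m : ℤ_[p]) = ∑ k ∈ Finset.range (m + 1), (m.choose k : ℤ_[p]) * deltaH p 1 f k 0 := by
  rw [key f m m]
  simp only [sub_self]
  rw [Finset.sum_eq_single m]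
  · rw [Ring.choose_natCast, Nat.choose_self, Nat.cast_one, mul_one, Nat.sub_self,
      Ring.choose_zero_right, mul_one]
  · intro ν hν hne
    simp only [Finset.mem_range] at hν
    rw [Ring.choose_zero_pos ℤ_[p] (by omega : 0 < m - ν), mul_zero]
  · intro h
    exact absurd (Finset.self_mem_range_succ m) h

lemma natCase (f : ℤ_[p] → ℤ_[p]) (hf : KS2 p f) (n m : ℕ) :
    (p : ℤ_[p]) ^ (n + 1) ∣
      f (m : ℤ_[p]) - ∑ ν ∈ Finset.range (n + 1),
        f ν * Ring.choose (m : ℤ_[p]) ν * Ring.choose ((n : ℤ_[p]) - m) (n - ν) := by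
  rw [← key f n m]
  set N := max m n with hN
  have hsub : Finset.range (n + 1) ⊆ Finset.range (N + 1) :=
    Finset.range_subset_range.mpr (by omega)
  have h1 : f (m : ℤ_[p]) = ∑ k ∈ Finset.range (N + 1), (m.choose k : ℤ_[p]) * deltaH p 1 f k 0 := by
    rw [newton_s6 f m]
    apply Finset.sum_subset (Finset.range_subset_range.mpr (by omega))
    intro x hx hx2
    simp only [Finset.mem_range] at hx2
    rw [Nat.choose_eq_zero_of_lt (by omega), Nat.cast_zero, zero_mul]
  rw [h1, ← Finset.sum_sdiff_eq_sub hsub]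
  apply Finset.dvd_sum
  intro k hk
  simp only [Finset.mem_sdiff, Finset.mem_range] at hk
  have hk2 : n + 1 ≤ k := by omega
  exact Dvd.dvd.mul_left (dvd_trans (pow_dvd_pow _ hk2) (hf.2 k 0)) _

end helpers

theorem stmt6 (p : ℕ) [Fact p.Prime] (f : ℤ_[p] → ℤ_[p]) (hf : KS2 p f) (n : ℕ) (s : ℤ_[p]) :
    (p : ℤ_[p]) ^ (n + 1) ∣
      f s - ∑ ν ∈ Finset.range (n + 1),
        f (ν : ℤ_[p]) * binomC p s ν * binomC p ((n : ℤ_[p]) - s) (n - ν) := by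
  suffices h : ∀ x : ℤ_[p], (p : ℤ_[p]) ^ (n + 1) ∣
      f x - ∑ ν ∈ Finset.range (n + 1),
        f (ν : ℤ_[p]) * Ring.choose x ν * Ring.choose ((n : ℤ_[p]) - x) (n - ν) by
    simpa only [binomC] using h s
  intro x
  set F : ℤ_[p] → ℤ_[p] := fun x =>
    f x - ∑ ν ∈ Finset.range (n + 1),
      f (ν : ℤ_[p]) * Ring.choose x ν * Ring.choose ((n : ℤ_[p]) - x) (n - ν) with hF
  have hgcont : Continuous F := by
    apply Continuous.sub hf.1
    apply continuous_finset_sum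
    intro ν _
    have h1 : Continuous (fun x : ℤ_[p] => Ring.choose x ν) := PadicInt.continuous_choose ν
    have h2 : Continuous (fun x : ℤ_[p] => Ring.choose ((n : ℤ_[p]) - x) (n - ν)) :=
      (PadicInt.continuous_choose (n - ν)).comp (continuous_const.sub continuous_id)
    exact (continuous_const.mul h1).mul h2
  have hiff : ∀ y : ℤ_[p], (p : ℤ_[p]) ^ (n + 1) ∣ y ↔ ‖y‖ ≤ (p : ℝ) ^ (-(n + 1 : ℕ) : ℤ) := by
    intro y
    rw [PadicInt.norm_le_pow_iff_mem_span_pow, Ideal.mem_span_singleton]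
  have hclosed : IsClosed {y : ℤ_[p] | (p : ℤ_[p]) ^ (n + 1) ∣ F y} := by
    have heq : {y : ℤ_[p] | (p : ℤ_[p]) ^ (n + 1) ∣ F y}
        = (fun y => ‖F y‖) ⁻¹' (Set.Iic ((p : ℝ) ^ (-(n + 1 : ℕ) : ℤ))) := by
      ext y
      simp only [Set.mem_setOf_eq, Set.mem_preimage, Set.mem_Iic]
      exact hiff (F y)
    rw [heq]
    exact IsClosed.preimage (continuous_norm.comp hgcont) isClosed_Iic
  have hrange : Set.range (Nat.cast : ℕ → ℤ_[p]) ⊆ {y : ℤ_[p] | (p : ℤ_[p]) ^ (n + 1) ∣ F y} := by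
    rintro _ ⟨m, rfl⟩
    exact natCase f hf n m
  have hx : x ∈ closure (Set.range (Nat.cast : ℕ → ℤ_[p])) := by
    rw [(PadicInt.denseRange_natCast (p := p)).closure_range]
    trivial
  exact closure_minimal hrange hclosed hx
end

section
/- Let p be a prime, f ∈ KS_{p,2}, a ∈ ℤ_p and b a nonzero integer, and define g : ℤ_p → ℤ_p by g(s) = f(a + b·s). Then g ∈ KS_{p,2}, and moreover v_p( Δ^n g(s) ) ≥ n·(1 + v_p(b)) for all integers n ≥ 1 and all s ∈ ℤ_p. -/
open Finset

open Function

private lemma deltaH_eq_iter (p : ℕ) [Fact p.Prime] (h : ℕ) (f : ℤ_[p] → ℤ_[p]) (n : ℕ)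
    (s : ℤ_[p]) : deltaH p h f n s = (fwdDiff ((h : ℤ_[p])))^[n] f s := by
  rw [fwdDiff_iter_eq_sum_shift, deltaH]
  refine Finset.sum_congr rfl fun k _ => ?_
  rw [zsmul_eq_mul, nsmul_eq_mul]
  push_cast
  ring

private lemma choose_pow_dvd (p : ℕ) [hp : Fact p.Prime] (m k : ℕ) (hk : 1 ≤ k) (hkm : k ≤ m) :
    p ^ (1 + padicValNat p m) ∣ m.choose k * p ^ k := by
  have hm : 1 ≤ m := hk.trans hkm
  have hC : m.choose k ≠ 0 := (Nat.choose_pos hkm).ne'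
  -- the identity k * C(m,k) = m * C(m-1,k-1)
  have hid : k * m.choose k = m * (m - 1).choose (k - 1) := by
    have h := Nat.add_one_mul_choose_eq (m - 1) (k - 1)
    simp only [Nat.succ_eq_add_one, Nat.sub_add_cancel hm, Nat.sub_add_cancel hk] at h
    rw [h, Nat.mul_comm]
  have hC' : (m - 1).choose (k - 1) ≠ 0 := (Nat.choose_pos (by omega)).ne'
  have hval : padicValNat p k + padicValNat p (m.choose k)
      = padicValNat p m + padicValNat p ((m - 1).choose (k - 1)) := by
    rw [← padicValNat.mul (by omega) hC, ← padicValNat.mul (by omega) hC', hid]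
  -- padicValNat p k < k
  have hwk : padicValNat p k < k := by
    have h1 : p ^ padicValNat p k ≤ k := Nat.le_of_dvd (by omega) pow_padicValNat_dvd
    have h2 : padicValNat p k < p ^ padicValNat p k :=
      Nat.lt_pow_self hp.out.one_lt
    omega
  have hpk : p ^ k ≠ 0 := pow_ne_zero _ hp.out.pos.ne'
  rw [padicValNat_dvd_iff_le (Nat.mul_ne_zero hC hpk)]
  rw [padicValNat.mul hC hpk, padicValNat.prime_pow]
  omega

private lemma fwdDiff_nat_expand (p : ℕ) [Fact p.Prime] (m : ℕ) (f : ℤ_[p] → ℤ_[p]) :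
    fwdDiff ((m : ℤ_[p])) f
      = ∑ k ∈ Finset.range m, m.choose (k + 1) • (fwdDiff (1 : ℤ_[p]))^[k + 1] f := by
  funext s
  have h := shift_eq_sum_fwdDiff_iter (1 : ℤ_[p]) f m s
  rw [Finset.sum_range_succ'] at h
  simp only [nsmul_eq_mul, Nat.choose_zero_right, Nat.cast_one, one_mul, iterate_zero, id_eq,
    nsmul_eq_mul, smul_eq_mul, mul_one] at h
  have : fwdDiff ((m : ℤ_[p])) f s = f (s + m) - f s := rfl
  rw [this, h]
  simp only [Finset.sum_apply, Pi.smul_apply, nsmul_eq_mul, smul_eq_mul, Pi.mul_apply,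
    Pi.natCast_apply]
  ring

private lemma step_dvd (p : ℕ) [Fact p.Prime] (m : ℕ) (hm : 1 ≤ m) (f : ℤ_[p] → ℤ_[p]) (c : ℕ)
    (H : ∀ j s, (p : ℤ_[p]) ^ (j + c) ∣ (fwdDiff (1 : ℤ_[p]))^[j] f s) (j : ℕ) (s : ℤ_[p]) :
    (p : ℤ_[p]) ^ (j + (c + 1 + padicValNat p m)) ∣
      (fwdDiff (1 : ℤ_[p]))^[j] (fwdDiff ((m : ℤ_[p])) f) s := by
  rw [fwdDiff_nat_expand, fwdDiff_iter_finset_sum]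
  rw [Finset.sum_apply]
  refine Finset.dvd_sum fun k _ => ?_
  rw [fwdDiff_iter_const_smul, Pi.smul_apply, ← iterate_add_apply, nsmul_eq_mul]
  set v := padicValNat p m
  have h1 : (p : ℤ_[p]) ^ (1 + v) ∣ (m.choose (k + 1) : ℤ_[p]) * (p : ℤ_[p]) ^ (k + 1) := by
    have := choose_pow_dvd p m (k + 1) (by omega) (by
      rcases Finset.mem_range.mp ‹k ∈ Finset.range m› with h
      omega)
    have := Nat.cast_dvd_cast (α := ℤ_[p]) this
    push_cast at this
    exact this
  have h2 : (p : ℤ_[p]) ^ (j + (k + 1) + c) ∣ (fwdDiff (1 : ℤ_[p]))^[j + (k + 1)] f s :=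
    H (j + (k + 1)) s
  have h3 : (p : ℤ_[p]) ^ (j + (c + 1 + v)) ∣
      (m.choose (k + 1) : ℤ_[p]) * (p : ℤ_[p]) ^ (j + (k + 1) + c) := by
    calc (p : ℤ_[p]) ^ (j + (c + 1 + v))
        = (p : ℤ_[p]) ^ (1 + v) * (p : ℤ_[p]) ^ (j + c) := by ring
      _ ∣ ((m.choose (k + 1) : ℤ_[p]) * (p : ℤ_[p]) ^ (k + 1)) * (p : ℤ_[p]) ^ (j + c) :=
          mul_dvd_mul_right h1 _
      _ = (m.choose (k + 1) : ℤ_[p]) * (p : ℤ_[p]) ^ (j + (k + 1) + c) := by ring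
  exact h3.trans (mul_dvd_mul_left _ h2)

private lemma iter_dvd (p : ℕ) [Fact p.Prime] (m : ℕ) (hm : 1 ≤ m) (f : ℤ_[p] → ℤ_[p])
    (hf : ∀ j s, (p : ℤ_[p]) ^ j ∣ (fwdDiff (1 : ℤ_[p]))^[j] f s) (n : ℕ) (s : ℤ_[p]) :
    (p : ℤ_[p]) ^ (n * (1 + padicValNat p m)) ∣ (fwdDiff ((m : ℤ_[p])))^[n] f s := by
  set v := padicValNat p m
  have key : ∀ n j s, (p : ℤ_[p]) ^ (j + n * (1 + v)) ∣
      (fwdDiff (1 : ℤ_[p]))^[j] ((fwdDiff ((m : ℤ_[p])))^[n] f) s := by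
    intro n
    induction n with
    | zero => intro j s; simpa using hf j s
    | succ n ih =>
      intro j s
      rw [iterate_succ_apply']
      have := step_dvd p m hm ((fwdDiff ((m : ℤ_[p])))^[n] f) (n * (1 + v)) ih j s
      have he : j + (n * (1 + v) + 1 + v) = j + (n + 1) * (1 + v) := by ring
      rwa [he] at this
  simpa using key n 0 s

theorem stmt7 (p : ℕ) [Fact p.Prime] (f : ℤ_[p] → ℤ_[p]) (hf : KS2 p f)
    (a : ℤ_[p]) (b : ℤ) (hb : b ≠ 0) (g : ℤ_[p] → ℤ_[p])
    (hg : ∀ s, g s = f (a + (b : ℤ_[p]) * s)) :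
    KS2 p g ∧ ∀ n : ℕ, 1 ≤ n → ∀ s : ℤ_[p],
      (p : ℤ_[p]) ^ (n * (1 + padicValInt p b)) ∣ deltaH p 1 g n s := by
  set m : ℕ := b.natAbs with hm
  have hm1 : 1 ≤ m := Nat.one_le_iff_ne_zero.mpr (Int.natAbs_ne_zero.mpr hb)
  have hval : padicValInt p b = padicValNat p m := rfl
  have hfd : ∀ j s, (p : ℤ_[p]) ^ j ∣ (fwdDiff (1 : ℤ_[p]))^[j] f s := by
    intro j s
    have := hf.2 j s
    rwa [deltaH_eq_iter, Nat.cast_one] at this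
  -- main divisibility for deltaH p 1 g
  have main : ∀ n : ℕ, ∀ s : ℤ_[p],
      (p : ℤ_[p]) ^ (n * (1 + padicValNat p m)) ∣ deltaH p 1 g n s := by
    intro n s
    rcases hb.lt_or_gt with hneg | hpos
    · -- b < 0, so (b : ℤ_[p]) = -(m : ℤ_[p])
      have hbm : (b : ℤ_[p]) = -(m : ℤ_[p]) := by
        have : (m : ℤ) = -b := by omega
        rw [← Int.cast_natCast, this]; push_cast; ring
      have hrw : deltaH p 1 g n s
          = (-1) ^ n * deltaH p m f n (a + (b : ℤ_[p]) * s + (b : ℤ_[p]) * n) := by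
        rw [deltaH, deltaH, Finset.mul_sum]
        rw [← Finset.sum_range_reflect]
        refine Finset.sum_congr rfl fun ν hν => ?_
        have hνn : ν ≤ n := by
          have := Finset.mem_range.mp hν; omega
        have h1 : n + 1 - 1 - ν = n - ν := by omega
        rw [h1, hg]
        have hsub : n - (n - ν) = ν := by omega
        have harg : a + (b : ℤ_[p]) * (s + ((n - ν : ℕ) : ℤ_[p]) * ((1 : ℕ) : ℤ_[p]))
            = a + (b : ℤ_[p]) * s + (b : ℤ_[p]) * (n : ℤ_[p])
              + (ν : ℤ_[p]) * ((m : ℕ) : ℤ_[p]) := by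
          rw [Nat.cast_one, Nat.cast_sub hνn, hbm]
          push_cast
          ring
        rw [hsub, Nat.choose_symm hνn, harg]
        have hsign : ((-1 : ℤ_[p])) ^ n * (-1 : ℤ_[p]) ^ (n - ν) = (-1) ^ ν := by
          have hx : (-1 : ℤ_[p]) ^ (n - ν) * (-1 : ℤ_[p]) ^ ν = (-1) ^ n := by
            rw [← pow_add]; congr 1; omega
          have h2 : (-1 : ℤ_[p]) ^ (n - ν) * (-1 : ℤ_[p]) ^ (n - ν) = 1 := by
            rw [← pow_add]; exact Even.neg_one_pow ⟨n - ν, rfl⟩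
          calc ((-1 : ℤ_[p])) ^ n * (-1 : ℤ_[p]) ^ (n - ν)
              = ((-1 : ℤ_[p]) ^ (n - ν) * (-1) ^ ν) * (-1) ^ (n - ν) := by rw [hx]
            _ = (-1) ^ ν * ((-1 : ℤ_[p]) ^ (n - ν) * (-1) ^ (n - ν)) := by ring
            _ = (-1) ^ ν := by rw [h2, mul_one]
        rw [← hsign]
        ring
      rw [hrw]
      have := iter_dvd p m hm1 f hfd n (a + (b : ℤ_[p]) * s + (b : ℤ_[p]) * n)
      rw [← deltaH_eq_iter] at this
      exact this.mul_left _
    · -- b > 0, so (b : ℤ_[p]) = (m : ℤ_[p])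
      have hbm : (b : ℤ_[p]) = (m : ℤ_[p]) := by
        have : (m : ℤ) = b := by omega
        rw [← Int.cast_natCast, this]
      have hrw : deltaH p 1 g n s = deltaH p m f n (a + (b : ℤ_[p]) * s) := by
        rw [deltaH, deltaH]
        refine Finset.sum_congr rfl fun ν _ => ?_
        rw [hg]
        have harg : a + (b : ℤ_[p]) * (s + (ν : ℤ_[p]) * ((1 : ℕ) : ℤ_[p]))
            = a + (b : ℤ_[p]) * s + (ν : ℤ_[p]) * ((m : ℕ) : ℤ_[p]) := by
          rw [Nat.cast_one, hbm]; ring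
        rw [harg]
      rw [hrw, deltaH_eq_iter]
      exact iter_dvd p m hm1 f hfd n _
  constructor
  · constructor
    · have : g = fun s => f (a + (b : ℤ_[p]) * s) := funext hg
      rw [this]
      exact hf.1.comp (continuous_const.add (continuous_const.mul continuous_id))
    · intro n s
      rcases Nat.eq_zero_or_pos n with rfl | hn
      · simp
      · have := main n s
        refine dvd_trans (pow_dvd_pow _ ?_) this
        calc n = n * 1 := (mul_one n).symm
          _ ≤ n * (1 + padicValNat p m) := Nat.mul_le_mul_left n (by omega)
  · intro n hn s
    rw [hval]
    exact main n s
end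

section
/- Let p be a prime, f ∈ KS_{p,2}, t ∈ ℤ_p, and define g : ℤ_p → ℤ_p by g(s) = f(s+t). Then for every integer ν ≥ 0: Δ^ν g(0) ≡ Δ^ν f(0) (mod p^{ν+1} ℤ_p); that is, the normalized Mahler coefficients Δ^ν f(0)/p^ν of a function of KS_{p,2} are invariant modulo pℤ_p under translation. -/
open Finset

lemma pow_dvd_closed (p : ℕ) [Fact p.Prime] (n : ℕ) :
    IsClosed {x : ℤ_[p] | (p : ℤ_[p]) ^ n ∣ x} := by
  have : {x : ℤ_[p] | (p : ℤ_[p]) ^ n ∣ x} = {x : ℤ_[p] | ‖x‖ ≤ (p : ℝ) ^ (-(n : ℤ))} := by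
    ext x
    rw [Set.mem_setOf_eq, Set.mem_setOf_eq, PadicInt.norm_le_pow_iff_mem_span_pow,
      Ideal.mem_span_singleton]
  rw [this]
  exact isClosed_le (by continuity) continuous_const

theorem stmt13 (p : ℕ) [Fact p.Prime] (f : ℤ_[p] → ℤ_[p]) (hf : KS2 p f) (t : ℤ_[p])
    (g : ℤ_[p] → ℤ_[p]) (hg : ∀ s, g s = f (s + t)) (ν : ℕ) :
    (p : ℤ_[p]) ^ (ν + 1) ∣ deltaH p 1 g ν 0 - deltaH p 1 f ν 0 := by
  -- deltaH g ν 0 = deltaH f ν t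
  have h0 : deltaH p 1 g ν 0 = deltaH p 1 f ν t := by
    unfold deltaH
    refine Finset.sum_congr rfl fun k _ => ?_
    rw [hg]
    ring_nf
  rw [h0]
  -- reduce to the claim for all t, proved by density of ℕ
  have key : ∀ u : ℤ_[p], (p : ℤ_[p]) ^ (ν + 1) ∣ deltaH p 1 f ν u - deltaH p 1 f ν 0 := by
    have hcont : Continuous fun u : ℤ_[p] => deltaH p 1 f ν u - deltaH p 1 f ν 0 := by
      refine Continuous.sub ?_ continuous_const
      unfold deltaH
      exact continuous_finset_sum _ fun k _ =>
        Continuous.mul continuous_const (hf.1.comp (by continuity))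
    have hnat : ∀ m : ℕ, (p : ℤ_[p]) ^ (ν + 1) ∣ deltaH p 1 f ν (m : ℤ_[p]) - deltaH p 1 f ν 0 := by
      intro m
      induction m with
      | zero => simp
      | succ k ih =>
        have step : deltaH p 1 f ν ((k : ℤ_[p]) + 1) - deltaH p 1 f ν (k : ℤ_[p])
            = deltaH p 1 f (ν + 1) (k : ℤ_[p]) := by
          rw [deltaH_eq_fwdDiff, deltaH_eq_fwdDiff, deltaH_eq_fwdDiff,
            Function.iterate_succ_apply', fwdDiff]
        have := hf.2 (ν + 1) (k : ℤ_[p])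
        push_cast
        have : deltaH p 1 f ν ((k : ℤ_[p]) + 1) - deltaH p 1 f ν 0
            = (deltaH p 1 f ν ((k : ℤ_[p]) + 1) - deltaH p 1 f ν (k : ℤ_[p]))
              + (deltaH p 1 f ν (k : ℤ_[p]) - deltaH p 1 f ν 0) := by ring
        rw [this, step]
        exact dvd_add (hf.2 (ν + 1) (k : ℤ_[p])) ih
    have hclosed : IsClosed {u : ℤ_[p] |
        (p : ℤ_[p]) ^ (ν + 1) ∣ deltaH p 1 f ν u - deltaH p 1 f ν 0} :=
      (pow_dvd_closed p (ν + 1)).preimage hcont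
    intro u
    have hu : u ∈ closure (Set.range (Nat.cast : ℕ → ℤ_[p])) := PadicInt.denseRange_natCast u
    refine hclosed.closure_subset (closure_mono ?_ hu)
    rintro x ⟨m, rfl⟩
    exact hnat m
  exact key t
end

section
/- Let p be a prime and f ∈ KS_{p,2} such that f(0) is a unit of ℤ_p. Then f(s) is a unit of ℤ_p for every s ∈ ℤ_p, and the pointwise inverse function s ↦ f(s)^{−1} also belongs to KS_{p,2}; in particular Δ^n (f^{−1})(s) ∈ p^n ℤ_p for all n ≥ 0 and all s ∈ ℤ_p. -/
open Finset Function

variable {p : ℕ} [Fact p.Prime]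

private lemma deltaH_eq (f : ℤ_[p] → ℤ_[p]) (n : ℕ) (s : ℤ_[p]) :
    deltaH p 1 f n s = (fwdDiff (1:ℤ_[p]))^[n] f s := by
  rw [deltaH, fwdDiff_iter_eq_sum_shift]
  refine Finset.sum_congr rfl fun k hk => ?_
  push_cast
  rw [zsmul_eq_mul]
  push_cast
  ring_nf

private lemma fd_shift (f : ℤ_[p] → ℤ_[p]) (k : ℕ) :
    (fwdDiff (1:ℤ_[p]))^[k] (fun y => f (y + 1)) = fun y => (fwdDiff (1:ℤ_[p]))^[k] f (y + 1) := by
  induction k generalizing f with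
  | zero => rfl
  | succ k IH =>
    rw [iterate_succ_apply, show fwdDiff (1:ℤ_[p]) (fun y => f (y+1))
      = fun y => fwdDiff (1:ℤ_[p]) f (y+1) from rfl, IH (fwdDiff (1:ℤ_[p]) f)]
    funext y
    rw [iterate_succ_apply]

private lemma fd_mul (f g : ℤ_[p] → ℤ_[p]) :
    fwdDiff (1:ℤ_[p]) (f * g)
      = (fun y => fwdDiff (1:ℤ_[p]) f y * g y) + fun y => f (y + 1) * fwdDiff (1:ℤ_[p]) g y := by
  funext y
  simp only [fwdDiff, Pi.mul_apply, Pi.add_apply]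
  ring

private lemma leib (f g : ℤ_[p] → ℤ_[p]) (n : ℕ) (y : ℤ_[p]) :
    (fwdDiff (1:ℤ_[p]))^[n] (f * g) y
      = ∑ k ∈ range (n + 1), (n.choose k : ℤ_[p]) *
          ((fwdDiff (1:ℤ_[p]))^[n - k] f (y + (k:ℤ_[p])) * (fwdDiff (1:ℤ_[p]))^[k] g y) := by
  induction n generalizing f g y with
  | zero => simp
  | succ n IH =>
    rw [iterate_succ_apply, fd_mul, fwdDiff_iter_add, Pi.add_apply]
    have h1 : (fwdDiff (1:ℤ_[p]))^[n] ((fun y => fwdDiff (1:ℤ_[p]) f y) * g) y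
        = ∑ k ∈ range (n + 1), (n.choose k : ℤ_[p]) *
            ((fwdDiff (1:ℤ_[p]))^[n + 1 - k] f (y + (k:ℤ_[p])) * (fwdDiff (1:ℤ_[p]))^[k] g y) := by
      rw [IH]
      refine Finset.sum_congr rfl fun k hk => ?_
      rw [Finset.mem_range] at hk
      have : n + 1 - k = (n - k) + 1 := by omega
      rw [this, ← iterate_succ_apply]
    have h2 : (fwdDiff (1:ℤ_[p]))^[n] ((fun y => f (y + 1)) * fun y => fwdDiff (1:ℤ_[p]) g y) y
        = ∑ k ∈ range (n + 1), (n.choose k : ℤ_[p]) *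
            ((fwdDiff (1:ℤ_[p]))^[n - k] f (y + (k:ℤ_[p]) + 1) * (fwdDiff (1:ℤ_[p]))^[k + 1] g y) := by
      rw [IH]
      refine Finset.sum_congr rfl fun k hk => ?_
      rw [fd_shift, ← iterate_succ_apply]
    have e1 : (fwdDiff (1:ℤ_[p]))^[n] ((fun y => fwdDiff (1:ℤ_[p]) f y * g y)) y
        = (fwdDiff (1:ℤ_[p]))^[n] ((fun y => fwdDiff (1:ℤ_[p]) f y) * g) y := rfl
    have e2 : (fwdDiff (1:ℤ_[p]))^[n] ((fun y => f (y + 1) * fwdDiff (1:ℤ_[p]) g y)) y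
        = (fwdDiff (1:ℤ_[p]))^[n] ((fun y => f (y + 1)) * fun y => fwdDiff (1:ℤ_[p]) g y) y := rfl
    rw [e1, e2, h1, h2]
    set T : ℕ → ℤ_[p] := fun k =>
      (fwdDiff (1:ℤ_[p]))^[n + 1 - k] f (y + (k:ℤ_[p])) * (fwdDiff (1:ℤ_[p]))^[k] g y with hT
    have hT2 : ∀ k ∈ range (n+1), (n.choose k : ℤ_[p]) *
        ((fwdDiff (1:ℤ_[p]))^[n - k] f (y + (k:ℤ_[p]) + 1) * (fwdDiff (1:ℤ_[p]))^[k + 1] g y)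
        = (n.choose k : ℤ_[p]) * T (k + 1) := by
      intro k hk
      simp only [hT]
      have : n + 1 - (k + 1) = n - k := by omega
      rw [this]
      push_cast
      ring_nf
    rw [Finset.sum_congr rfl hT2]
    have goalT : ∀ k ∈ range (n+2), ((n+1).choose k : ℤ_[p]) *
        ((fwdDiff (1:ℤ_[p]))^[n + 1 - k] f (y + (k:ℤ_[p])) * (fwdDiff (1:ℤ_[p]))^[k] g y)
        = ((n+1).choose k : ℤ_[p]) * T k := fun k _ => rfl
    rw [Finset.sum_congr rfl goalT,
      Finset.sum_range_succ' (fun k => ((n+1).choose k : ℤ_[p]) * T k) (n+1)]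
    have expand : ∀ k ∈ range (n+1), ((n+1).choose (k+1) : ℤ_[p]) * T (k+1)
        = (n.choose k : ℤ_[p]) * T (k+1) + (n.choose (k+1) : ℤ_[p]) * T (k+1) := by
      intro k _
      rw [Nat.choose_succ_succ]
      push_cast
      ring
    rw [Finset.sum_congr rfl expand, Finset.sum_add_distrib]
    have key : ∑ k ∈ range (n+1), (n.choose k : ℤ_[p]) * T k
        = ∑ k ∈ range (n+1), (n.choose (k+1) : ℤ_[p]) * T (k+1) + T 0 := by
      rw [Finset.sum_range_succ (fun k => (n.choose (k+1) : ℤ_[p]) * T (k+1)) n,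
          Finset.sum_range_succ' (fun k => (n.choose k : ℤ_[p]) * T k) n]
      simp [Nat.choose_succ_self]
    rw [key]
    simp only [Nat.choose_zero_right, Nat.cast_one, one_mul]
    ring

theorem stmt16 (p : ℕ) [Fact p.Prime] (f : ℤ_[p] → ℤ_[p]) (hf : KS2 p f)
    (h0 : IsUnit (f 0)) :
    (∀ s : ℤ_[p], IsUnit (f s)) ∧ KS2 p fun s => Ring.inverse (f s) := by
  obtain ⟨hc, hK⟩ := hf
  have hK' : ∀ (n : ℕ) (s : ℤ_[p]), (p:ℤ_[p])^n ∣ (fwdDiff (1:ℤ_[p]))^[n] f s := by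
    intro n s
    rw [← deltaH_eq]
    exact hK n s
  -- step congruence mod p
  have hstep : ∀ s : ℤ_[p], (p:ℤ_[p]) ∣ f (s + 1) - f s := by
    intro s
    have := hK' 1 s
    simpa [fwdDiff] using this
  have hnat : ∀ n : ℕ, (p:ℤ_[p]) ∣ f (n:ℤ_[p]) - f 0 := by
    intro n
    induction n with
    | zero => simp
    | succ n IH =>
      have hcast : ((n+1:ℕ) : ℤ_[p]) = (n:ℤ_[p]) + 1 := by push_cast; ring
      rw [hcast, ← sub_add_sub_cancel (f ((n:ℤ_[p]) + 1)) (f (n:ℤ_[p])) (f 0)]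
      exact dvd_add (hstep _) IH
  have hall : ∀ s : ℤ_[p], (p:ℤ_[p]) ∣ f s - f 0 := by
    intro s
    have hiff : ∀ x : ℤ_[p], (p:ℤ_[p]) ∣ x ↔ ‖x‖ ≤ (p:ℝ)^(-1:ℤ) := by
      intro x
      rw [PadicInt.norm_le_pow_iff_norm_lt_pow_add_one]
      norm_num
      exact (PadicInt.norm_lt_one_iff_dvd x).symm
    have hclosed : IsClosed {x : ℤ_[p] | ‖f x - f 0‖ ≤ (p:ℝ)^(-1:ℤ)} :=
      isClosed_le ((hc.sub continuous_const).norm) continuous_const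
    have hsub : Set.range ((↑) : ℕ → ℤ_[p]) ⊆ {x : ℤ_[p] | ‖f x - f 0‖ ≤ (p:ℝ)^(-1:ℤ)} := by
      rintro _ ⟨n, rfl⟩
      exact (hiff _).mp (hnat n)
    have hdense : s ∈ closure (Set.range ((↑) : ℕ → ℤ_[p])) := PadicInt.denseRange_natCast s
    have : s ∈ {x : ℤ_[p] | ‖f x - f 0‖ ≤ (p:ℝ)^(-1:ℤ)} :=
      closure_minimal hsub hclosed hdense
    exact (hiff _).mpr this
  have hunit : ∀ s : ℤ_[p], IsUnit (f s) := by
    intro s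
    rw [PadicInt.isUnit_iff]
    have h1 : ‖f 0‖ = 1 := PadicInt.isUnit_iff.mp h0
    have h2 : ‖f s - f 0‖ < 1 := (PadicInt.norm_lt_one_iff_dvd _).mpr (hall s)
    have hne : ‖f 0‖ ≠ ‖f s - f 0‖ := by rw [h1]; exact h2.ne'
    rw [show f s = f 0 + (f s - f 0) by ring, PadicInt.norm_add_eq_max_of_ne hne, h1]
    exact max_eq_left h2.le
  set g : ℤ_[p] → ℤ_[p] := fun s => Ring.inverse (f s) with hg
  have hfg : f * g = 1 := by
    funext s
    simp only [hg, Pi.mul_apply, Pi.one_apply]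
    exact Ring.mul_inverse_cancel _ (hunit s)
  have hgK : ∀ (n : ℕ) (s : ℤ_[p]), (p:ℤ_[p])^n ∣ (fwdDiff (1:ℤ_[p]))^[n] g s := by
    intro n
    induction n using Nat.strong_induction_on with
    | _ n IH =>
      match n with
      | 0 => intro s; simp
      | (m+1) =>
        intro s
        have hzero : (fwdDiff (1:ℤ_[p]))^[m+1] (f * g) s = 0 := by
          rw [hfg, iterate_succ_apply,
            show fwdDiff (1:ℤ_[p]) (1 : ℤ_[p] → ℤ_[p]) = 0 from funext fun y => by
              simp [fwdDiff],
            Function.iterate_fixed (funext fun y => by simp [fwdDiff] : fwdDiff (1:ℤ_[p]) (0 : ℤ_[p] → ℤ_[p]) = 0) m]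
          rfl
        rw [leib, Finset.sum_range_succ] at hzero
        simp only [Nat.choose_self, Nat.cast_one, one_mul, Nat.sub_self, iterate_zero, id_eq]
          at hzero
        have hmain := eq_neg_of_add_eq_zero_right hzero
        have hdvd : (p:ℤ_[p])^(m+1)
            ∣ f (s + ((m+1:ℕ):ℤ_[p])) * (fwdDiff (1:ℤ_[p]))^[m+1] g s := by
          rw [hmain]
          refine dvd_neg.mpr (Finset.dvd_sum fun k hk => ?_)
          rw [Finset.mem_range] at hk
          have hd1 : (p:ℤ_[p])^(m+1-k) ∣ (fwdDiff (1:ℤ_[p]))^[m+1-k] f (s + (k:ℤ_[p])) := hK' _ _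
          have hd2 : (p:ℤ_[p])^k ∣ (fwdDiff (1:ℤ_[p]))^[k] g s := IH k (by omega) s
          have : (p:ℤ_[p])^(m+1) = (p:ℤ_[p])^(m+1-k) * (p:ℤ_[p])^k := by
            rw [← pow_add]; congr 1; omega
          rw [this]
          exact (mul_dvd_mul hd1 hd2).mul_left _
        have hcancel : Ring.inverse (f (s + ((m+1:ℕ):ℤ_[p])))
            * (f (s + ((m+1:ℕ):ℤ_[p])) * (fwdDiff (1:ℤ_[p]))^[m+1] g s)
            = (fwdDiff (1:ℤ_[p]))^[m+1] g s := by
          rw [← mul_assoc, Ring.inverse_mul_cancel _ (hunit _), one_mul]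
        rw [← hcancel]
        exact hdvd.mul_left _
  refine ⟨hunit, ?_, ?_⟩
  · -- continuity of g
    have hnormg : ∀ s, ‖g s‖ = 1 := by
      intro s
      have : IsUnit (g s) := by
        simp only [hg]
        exact ⟨(hunit s).unit⁻¹, (Ring.inverse_of_isUnit (hunit s)).symm⟩
      exact PadicInt.isUnit_iff.mp this
    have hdiff : ∀ a b : ℤ_[p], ‖g a - g b‖ ≤ ‖f a - f b‖ := by
      intro a b
      have hid : g a - g b = g a * (f b - f a) * g b := by
        have h1 : g a * f a = 1 := by
          simpa [mul_comm] using Ring.mul_inverse_cancel _ (hunit a)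
        have h2 : f b * g b = 1 := Ring.mul_inverse_cancel _ (hunit b)
        calc g a - g b = g a * (f b * g b) - (g a * f a) * g b := by rw [h1, h2]; ring
          _ = g a * (f b - f a) * g b := by ring
      rw [hid, norm_mul, norm_mul, hnormg, hnormg, one_mul, mul_one, norm_sub_rev]
    rw [Metric.continuous_iff]
    intro b ε hε
    obtain ⟨δ, hδ, hδ'⟩ := Metric.continuous_iff.mp hc b ε hε
    exact ⟨δ, hδ, fun a ha => lt_of_le_of_lt (by
      rw [dist_eq_norm, dist_eq_norm]; exact hdiff a b) (hδ' a ha)⟩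
  · intro n s
    rw [deltaH_eq]
    exact hgK n s
end

section
/- Let p be a prime, n ≥ 1, and f₁, …, f_n ∈ WKS^0_{p,2}, with ξ_ν ∈ ℤ_p the unique zero of f_ν (1 ≤ ν ≤ n). Let F be the pointwise product F = f₁·f₂·⋯·f_n. Then: (i) ‖F(s)‖_p = p^{−n}·∏_{ν=1}^n ‖s − ξ_ν‖_p for every s ∈ ℤ_p; (ii) Δ^n F(0)/p^n ≡ n!·∏_{ν=1}^n (Δ¹f_ν(0)/p) (mod pℤ_p); and (iii) v_p( Δ^ν F(0)/p^ν ) ≥ n − ν for 0 ≤ ν ≤ n. -/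
open Finset

/-- `f ∈ WKS^0_{p,2}`: `f ∈ KS_{p,2}`, `f(0) ∈ pℤ_p`, `Δ¹f(0)/p` is a unit of `ℤ_p`, and
additionally `Δ²f(0)/4 ∈ 2ℤ_2` (i.e. `8 ∣ Δ²f(0)`) in case `p = 2`. -/
def WKS0 (p : ℕ) [Fact p.Prime] (f : ℤ_[p] → ℤ_[p]) : Prop :=
  KS2 p f ∧ (p : ℤ_[p]) ∣ f 0 ∧
    (∃ u : ℤ_[p], IsUnit u ∧ deltaH p 1 f 1 0 = (p : ℤ_[p]) * u) ∧
    (p = 2 → (p : ℤ_[p]) ^ 3 ∣ deltaH p 1 f 2 0)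

section Aux
open Polynomial
open scoped fwdDiff

namespace S17

variable {G H : Type*} [AddCommGroup G] [AddCommGroup H]

lemma shift_iter (g : ℕ → G) (n t x : ℕ) :
    (Δ_[1])^[n] (fun k => g (t + k)) x = (Δ_[1])^[n] g (t + x) := by
  rw [fwdDiff_iter_eq_sum_shift, fwdDiff_iter_eq_sum_shift]
  refine Finset.sum_congr rfl fun k _ => ?_
  simp [smul_eq_mul, add_assoc]

lemma map_iter (φ : G →+ H) (g : ℕ → G) (n x : ℕ) :
    (Δ_[1])^[n] (fun k => φ (g k)) x = φ ((Δ_[1])^[n] g x) := by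
  rw [fwdDiff_iter_eq_sum_shift, fwdDiff_iter_eq_sum_shift, map_sum]
  refine Finset.sum_congr rfl fun k _ => ?_
  rw [map_zsmul]

variable {K : Type*} [Field K]

lemma vanish : ∀ (n : ℕ) (P : K[X]), P.degree < n →
    ∀ x : ℕ, (Δ_[1])^[n] (fun k : ℕ => P.eval (k : K)) x = 0 := by
  intro n
  induction n with
  | zero =>
    intro P hP x
    rw [Nat.cast_zero, Nat.WithBot.lt_zero_iff, degree_eq_bot] at hP
    simp [hP]
  | succ n IH =>
    intro P hP x
    rw [Function.iterate_succ_apply]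
    have hQ : Δ_[1] (fun k : ℕ => P.eval (k : K)) = fun k : ℕ =>
        (P.comp (X + C 1) - P).eval (k : K) := by
      funext k
      simp only [fwdDiff, eval_sub, eval_comp, eval_add, eval_X, eval_C]
      push_cast
      ring_nf
    rw [hQ]
    refine IH _ ?_ x
    by_cases h0 : P = 0
    · simp [h0]
    by_cases hdeg : P.degree ≤ 0
    · rw [Polynomial.eq_C_of_degree_le_zero hdeg]
      simp
    push_neg at hdeg
    have hPn : P.degree ≤ n := by
      rcases Polynomial.degree_eq_natDegree h0 with h
      rw [h] at hP ⊢
      exact_mod_cast Nat.lt_succ_iff.mp (by exact_mod_cast hP)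
    have hlc : (P.comp (X + C 1)).leadingCoeff = P.leadingCoeff := by
      rw [Polynomial.leadingCoeff_comp (by rw [natDegree_X_add_C]; exact one_ne_zero),
        leadingCoeff_X_add_C, one_pow, mul_one]
    have hcomp_ne : P.comp (X + C 1) ≠ 0 := fun h => h0 (leadingCoeff_eq_zero.mp
      (by rw [← hlc, h, leadingCoeff_zero]))
    have hnd : (P.comp (X + C 1)).natDegree = P.natDegree := by
      rw [natDegree_comp, natDegree_X_add_C, mul_one]
    have hcomp_deg : (P.comp (X + C 1)).degree = P.degree := by
      rw [degree_eq_natDegree hcomp_ne, degree_eq_natDegree h0, hnd]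
    calc (P.comp (X + C 1) - P).degree < (P.comp (X + C 1)).degree :=
        degree_sub_lt hcomp_deg hcomp_ne hlc
      _ = P.degree := hcomp_deg
      _ ≤ n := hPn

end S17

namespace S17
open Finset Polynomial
open scoped fwdDiff

variable {K : Type*} [Field K] [CharZero K]

lemma choose_eq_poly (m : ℕ) (x : Fin m → ℕ) :
    ∃ P : K[X], P.degree ≤ (∑ i, x i : ℕ) ∧
      ∀ k : ℕ, P.eval (k : K) = ∏ i, (k.choose (x i) : K) := by
  refine ⟨∏ i, Polynomial.C (((x i).factorial : K)⁻¹) * descPochhammer K (x i), ?_, ?_⟩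
  · refine le_trans (degree_prod_le _ _) ?_
    rw [Nat.cast_sum]
    refine Finset.sum_le_sum fun i _ => ?_
    refine le_trans (degree_mul_le _ _) ?_
    have h1 : (descPochhammer K (x i)).degree ≤ (x i : WithBot ℕ) := by
      refine le_trans degree_le_natDegree ?_
      rw [descPochhammer_natDegree]
    have h2 : (Polynomial.C (((x i).factorial : K)⁻¹)).degree ≤ 0 := degree_C_le
    calc (Polynomial.C (((x i).factorial : K)⁻¹)).degree + (descPochhammer K (x i)).degree
        ≤ 0 + (x i : WithBot ℕ) := add_le_add h2 h1
      _ = (x i : WithBot ℕ) := zero_add _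
  · intro k
    rw [eval_prod]
    refine Finset.prod_congr rfl fun i _ => ?_
    rw [eval_mul, eval_C, descPochhammer_eval_eq_descFactorial]
    have : (k.descFactorial (x i) : K) = ((x i).factorial : K) * (k.choose (x i) : K) := by
      rw [← Nat.cast_mul, Nat.descFactorial_eq_factorial_mul_choose]
    rw [this, ← mul_assoc, inv_mul_cancel₀ (by exact_mod_cast (x i).factorial_ne_zero), one_mul]

lemma c_vanish (n m : ℕ) (x : Fin m → ℕ) (h : ∑ i, x i < n) :
    (Δ_[1])^[n] (fun k : ℕ => ∏ i, (k.choose (x i) : K)) 0 = 0 := by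
  obtain ⟨P, hd, he⟩ := choose_eq_poly (K := K) m x
  have : (fun k : ℕ => ∏ i, (k.choose (x i) : K)) = fun k : ℕ => P.eval (k : K) := by
    funext k; rw [he]
  rw [this]
  exact vanish n P (lt_of_le_of_lt hd (by exact_mod_cast h)) 0

end S17

namespace S17
open Finset Polynomial
open scoped fwdDiff

variable {K : Type*} [Field K] [CharZero K]

lemma fwdDiff_apply' {G : Type*} [AddCommGroup G] (g : ℕ → G) (x : ℕ) :
    Δ_[1] g x = g (x + 1) - g x := rfl

lemma iter_succ' {G : Type*} [AddCommGroup G] (g : ℕ → G) (n x : ℕ) :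
    (Δ_[1])^[n + 1] g x = (Δ_[1])^[n] g (x + 1) - (Δ_[1])^[n] g x := by
  rw [Function.iterate_succ_apply', fwdDiff_apply']

lemma id_mul (g : ℕ → K) : ∀ (n x : ℕ), (Δ_[1])^[n + 1] (fun k : ℕ => (k : K) * g k) x
    = (x : K) * (Δ_[1])^[n + 1] g x + (n + 1 : K) * (Δ_[1])^[n] g (x + 1) := by
  intro n
  induction n with
  | zero =>
    intro x
    simp only [zero_add, Function.iterate_one, Function.iterate_zero_apply, fwdDiff_apply']
    push_cast
    ring
  | succ n IH =>
    intro x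
    rw [iter_succ' _ (n + 1) x, IH x, IH (x + 1), iter_succ' g (n + 1) x,
      iter_succ' g n (x + 1)]
    push_cast
    ring

lemma pow_fact : ∀ (n : ℕ) (t : K), (Δ_[1])^[n] (fun k : ℕ => ((k : K) + t) ^ n) 0
    = (n.factorial : K) := by
  intro n
  induction n with
  | zero => intro t; simp
  | succ n IH =>
    intro t
    have hv : ∀ x : ℕ, (Δ_[1])^[n + 1] (fun k : ℕ => ((k : K) + t) ^ n) x = 0 := by
      intro x
      have he : (fun k : ℕ => ((k : K) + t) ^ n) = fun k : ℕ => ((X + C t) ^ n).eval (k : K) := by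
        funext k; simp
      rw [he]
      refine vanish (n + 1) _ (lt_of_le_of_lt (degree_pow_le _ _) ?_) x
      have h1 : (X + C t).degree = 1 := degree_X_add_C t
      rw [h1]
      have h2 : n • (1 : WithBot ℕ) = (n : WithBot ℕ) := by simp
      rw [h2]
      exact_mod_cast Nat.lt_succ_self n
    have hsplit : (fun k : ℕ => ((k : K) + t) ^ (n + 1))
        = (fun k : ℕ => (k : K) * ((k : K) + t) ^ n)
          + fun k : ℕ => t * ((k : K) + t) ^ n := by
      funext k; simp only [Pi.add_apply]; ring
    have hconst : (fun k : ℕ => t * ((k : K) + t) ^ n)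
        = t • fun k : ℕ => ((k : K) + t) ^ n := by
      funext k; simp [smul_eq_mul]
    rw [hsplit, fwdDiff_iter_add, Pi.add_apply, hconst, fwdDiff_iter_const_smul,
      Pi.smul_apply, hv 0, smul_zero, add_zero, id_mul _ n 0]
    have hshift : (Δ_[1])^[n] (fun k : ℕ => ((k : K) + t) ^ n) (0 + 1)
        = (Δ_[1])^[n] (fun k : ℕ => ((k : K) + (t + 1)) ^ n) 0 := by
      rw [← shift_iter (fun k : ℕ => ((k : K) + t) ^ n) n 1 0]
      have h2 : (fun k : ℕ => (((1 + k : ℕ) : K) + t) ^ n)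
          = fun k : ℕ => ((k : K) + (t + 1)) ^ n := by
        funext k; push_cast; ring
      rw [h2]
    rw [Nat.cast_zero, zero_mul, zero_add, hshift, IH (t + 1)]
    push_cast [Nat.factorial_succ]
    ring

lemma c_one (n : ℕ) : (Δ_[1])^[n] (fun k : ℕ => (k : K) ^ n) 0 = (n.factorial : K) := by
  have := pow_fact n (0 : K)
  simpa using this

end S17

namespace S17

variable {p : ℕ} [hp : Fact p.Prime]

lemma deltaH_eq (f : ℤ_[p] → ℤ_[p]) (n : ℕ) (s : ℤ_[p]) :
    deltaH p 1 f n s = (Δ_[1])^[n] (fun k : ℕ => f (s + (k : ℤ_[p]))) 0 := by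
  rw [fwdDiff_iter_eq_sum_shift]
  unfold deltaH
  refine Finset.sum_congr rfl fun k hk => ?_
  simp only [smul_eq_mul, mul_one, zero_add, zsmul_eq_mul, Nat.cast_one]
  push_cast
  ring

lemma deltaH_nat (f : ℤ_[p] → ℤ_[p]) (n : ℕ) (t : ℕ) :
    deltaH p 1 f n (t : ℤ_[p]) = (Δ_[1])^[n] (fun k : ℕ => f (k : ℤ_[p])) t := by
  rw [deltaH_eq]
  have h1 : (fun k : ℕ => f ((t : ℤ_[p]) + (k : ℤ_[p])))
      = fun k : ℕ => f (((t + k : ℕ) : ℤ_[p])) := by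
    funext k; push_cast; ring_nf
  rw [h1]
  exact shift_iter (fun k : ℕ => f (k : ℤ_[p])) n t 0

lemma newton_nat (g : ℕ → ℤ_[p]) (t m : ℕ) :
    g (t + m) = ∑ l ∈ Finset.range (m + 1), (m.choose l) • (Δ_[1])^[l] g t := by
  have := shift_eq_sum_fwdDiff_iter (1 : ℕ) g m t
  simpa [smul_eq_mul, mul_one] using this

end S17

namespace S17
variable {p : ℕ} [hp : Fact p.Prime]

lemma dvd_iff_norm_le {x : ℤ_[p]} {n : ℕ} :
    (p : ℤ_[p]) ^ n ∣ x ↔ ‖x‖ ≤ (p : ℝ) ^ (-(n : ℤ)) := by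
  rw [PadicInt.norm_le_pow_iff_mem_span_pow, Ideal.mem_span_singleton]

section OneFunc

variable (f : ℤ_[p] → ℤ_[p]) (hf : WKS0 p f)

/-- the iterated difference of `f` restricted to `ℕ` -/
noncomputable def phi (j t : ℕ) : ℤ_[p] := (Δ_[1])^[j] (fun k : ℕ => f (k : ℤ_[p])) t

include hf

lemma phi_dvd (j t : ℕ) : (p : ℤ_[p]) ^ j ∣ phi f j t := by
  have := hf.1.2 j (t : ℤ_[p])
  rwa [deltaH_nat] at this

lemma phi_zero_eq (j : ℕ) : phi f j 0 = deltaH p 1 f j 0 := by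
  have := deltaH_nat f j 0
  rw [Nat.cast_zero] at this
  rw [phi, ← this]

lemma phi_newton (j t : ℕ) :
    phi f j t = ∑ l ∈ Finset.range (t + 1), (t.choose l) • phi f (j + l) 0 := by
  have h := newton_nat ((Δ_[1])^[j] (fun k : ℕ => f (k : ℤ_[p]))) 0 t
  rw [zero_add] at h
  rw [phi, h]
  refine Finset.sum_congr rfl fun l _ => ?_
  congr 1
  rw [phi, ← Function.iterate_add_apply, add_comm l j]

lemma phi_one_diff (t : ℕ) : (p : ℤ_[p]) ^ 2 ∣ phi f 1 t - phi f 1 0 := by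
  rw [phi_newton f hf 1 t, Finset.sum_range_succ']
  simp only [Nat.choose_zero_right, one_smul, add_zero, add_sub_cancel_right]
  refine Finset.dvd_sum fun l _ => ?_
  rw [nsmul_eq_mul]
  refine Dvd.dvd.mul_left ?_ _
  exact dvd_trans (pow_dvd_pow _ (by omega)) (phi_dvd f hf (1 + (l + 1)) 0)

lemma norm_phi_one_zero : ‖phi f 1 0‖ = (p : ℝ)⁻¹ := by
  obtain ⟨u, hu, heq⟩ := hf.2.2.1
  rw [phi_zero_eq f hf, heq, norm_mul, PadicInt.norm_p, PadicInt.isUnit_iff.mp hu,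
    mul_one]

omit hf in
lemma one_lt_p : (1 : ℝ) < (p : ℝ) := by exact_mod_cast hp.1.one_lt

lemma norm_phi_one (t : ℕ) : ‖phi f 1 t‖ = (p : ℝ)⁻¹ := by
  have h2 : ‖phi f 1 t - phi f 1 0‖ ≤ (p : ℝ) ^ (-(2 : ℕ) : ℤ) :=
    dvd_iff_norm_le.mp (phi_one_diff f hf t)
  have hlt : ‖phi f 1 t - phi f 1 0‖ < ‖phi f 1 0‖ := by
    rw [norm_phi_one_zero f hf]
    refine lt_of_le_of_lt h2 ?_
    rw [show ((p : ℝ))⁻¹ = (p : ℝ) ^ (-(1 : ℕ) : ℤ) by simp]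
    exact zpow_lt_zpow_right₀ (one_lt_p (p := p)) (by norm_num)
  have : phi f 1 t = phi f 1 0 + (phi f 1 t - phi f 1 0) := by ring
  rw [this, PadicInt.norm_add_eq_max_of_ne (ne_of_gt hlt),
    max_eq_left hlt.le, norm_phi_one_zero f hf]

lemma phi_two_dvd (hp2 : p = 2) (t : ℕ) : (p : ℤ_[p]) ^ 3 ∣ phi f 2 t := by
  rw [phi_newton f hf 2 t]
  refine Finset.dvd_sum fun l _ => ?_
  rw [nsmul_eq_mul]
  refine Dvd.dvd.mul_left ?_ _
  rcases Nat.eq_zero_or_pos l with rfl | hl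
  · rw [phi_zero_eq f hf]
    exact hf.2.2.2 hp2
  · exact dvd_trans (pow_dvd_pow _ (by omega)) (phi_dvd f hf (2 + l) 0)

end OneFunc
end S17

namespace S17
variable {p : ℕ} [hp : Fact p.Prime]

lemma lt_two_pow_pred : ∀ l, 3 ≤ l → l < 2 ^ (l - 1) := by
  intro l hl
  induction l, hl using Nat.le_induction with
  | base => norm_num
  | succ n hn IH =>
    have h1 : n + 1 - 1 = (n - 1) + 1 := by omega
    rw [h1, pow_succ]
    omega

lemma choose_norm_mul_le (m l : ℕ) (hm : 1 ≤ m) (hl : 1 ≤ l) :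
    ‖(m.choose l : ℤ_[p])‖ * ‖(l : ℤ_[p])‖ ≤ ‖(m : ℤ_[p])‖ := by
  have hid : m * (m - 1).choose (l - 1) = m.choose l * l := by
    have h := Nat.add_one_mul_choose_eq (m - 1) (l - 1)
    have h1 : m - 1 + 1 = m := by omega
    have h2 : l - 1 + 1 = l := by omega
    rwa [h1, h2] at h
  have hcast : ((m : ℤ_[p]) * ((m - 1).choose (l - 1) : ℤ_[p]))
      = (m.choose l : ℤ_[p]) * (l : ℤ_[p]) := by exact_mod_cast hid
  calc ‖(m.choose l : ℤ_[p])‖ * ‖(l : ℤ_[p])‖ = ‖(m.choose l : ℤ_[p]) * l‖ :=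
        (norm_mul _ _).symm
    _ = ‖(m : ℤ_[p]) * ((m - 1).choose (l - 1) : ℤ_[p])‖ := by rw [← hcast]
    _ = ‖(m : ℤ_[p])‖ * ‖((m - 1).choose (l - 1) : ℤ_[p])‖ := norm_mul _ _
    _ ≤ ‖(m : ℤ_[p])‖ * 1 := by
        gcongr
        exact PadicInt.norm_le_one _
    _ = _ := mul_one _

lemma norm_nat_ge (l : ℕ) (hl : 2 ≤ l) (h : ¬(p = 2 ∧ l = 2)) :
    (p : ℝ) ^ (-(l : ℤ)) ≤ (p : ℝ) ^ (-(2 : ℤ)) * ‖(l : ℤ_[p])‖ := by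
  have hnd : ¬ ((p : ℕ) ^ (l - 1) ∣ l) := by
    intro hdvd
    have hle : p ^ (l - 1) ≤ l := Nat.le_of_dvd (by omega) hdvd
    have h2 : 2 ^ (l - 1) ≤ p ^ (l - 1) := Nat.pow_le_pow_left hp.1.two_le _
    rcases Nat.lt_or_ge l 3 with h3 | h3
    · have hl2 : l = 2 := by omega
      subst hl2
      simp at hle
      have : p = 2 := le_antisymm hle hp.1.two_le
      exact h ⟨this, rfl⟩
    · exact absurd hle (not_le.mpr (lt_of_lt_of_le (lt_two_pow_pred l h3) h2))
  have hnorm : ¬ (‖(l : ℤ_[p])‖ ≤ (p : ℝ) ^ (-(l - 1 : ℕ) : ℤ)) := by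
    intro hle
    have : ((p : ℤ) ^ (l - 1 : ℕ)) ∣ (l : ℤ) := by
      rw [← PadicInt.norm_int_le_pow_iff_dvd]
      exact_mod_cast hle
    exact hnd (by exact_mod_cast this)
  have hge : (p : ℝ) ^ (-(l - 2 : ℕ) : ℤ) ≤ ‖(l : ℤ_[p])‖ := by
    by_contra hcon
    push_neg at hcon
    rw [PadicInt.norm_lt_pow_iff_norm_le_pow_sub_one] at hcon
    refine hnorm ?_
    have he : (-(l - 2 : ℕ) - 1 : ℤ) = (-(l - 1 : ℕ) : ℤ) := by
      push_cast [Nat.cast_sub (by omega : 2 ≤ l), Nat.cast_sub (by omega : 1 ≤ l)]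
      ring
    rwa [he] at hcon
  calc (p : ℝ) ^ (-(l : ℤ)) = (p : ℝ) ^ (-(2 : ℤ)) * (p : ℝ) ^ (-(l - 2 : ℕ) : ℤ) := by
        rw [← zpow_add₀ (by exact_mod_cast hp.1.pos.ne' : (p:ℝ) ≠ 0)]
        congr 1
        push_cast [Nat.cast_sub (by omega : 2 ≤ l)]
        ring
    _ ≤ (p : ℝ) ^ (-(2 : ℤ)) * ‖(l : ℤ_[p])‖ := by
        have hp2 : (0:ℝ) ≤ (p : ℝ) ^ (-(2 : ℤ)) := by positivity
        exact mul_le_mul_of_nonneg_left hge hp2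

end S17

namespace S17
variable {p : ℕ} [hp : Fact p.Prime]
variable (f : ℤ_[p] → ℤ_[p]) (hf : WKS0 p f)
include hf

lemma term_bound (t m l : ℕ) (hm : 1 ≤ m) (hl : 2 ≤ l) :
    ‖(m.choose l : ℤ_[p]) * phi f l t‖ ≤ ‖(m : ℤ_[p])‖ * (p : ℝ) ^ (-(2 : ℤ)) := by
  rw [norm_mul]
  have hppos : (0:ℝ) < p := by exact_mod_cast hp.1.pos
  by_cases h22 : p = 2 ∧ l = 2
  · obtain ⟨hp2, hl2⟩ := h22
    subst hl2
    have hphi : ‖phi f 2 t‖ ≤ (p : ℝ) ^ (-(3 : ℕ) : ℤ) :=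
      dvd_iff_norm_le.mp (phi_two_dvd f hf hp2 t)
    have h2p : ((2 : ℕ) : ℤ_[p]) = ((p : ℕ) : ℤ_[p]) :=
      congrArg (fun n : ℕ => ((n : ℤ_[p]))) hp2.symm
    have hnorm2 : ‖((2 : ℕ) : ℤ_[p])‖ = (p : ℝ)⁻¹ := by rw [h2p]; exact PadicInt.norm_p
    have hC : ‖(m.choose 2 : ℤ_[p])‖ ≤ ‖(m : ℤ_[p])‖ * (p : ℝ) := by
      have := choose_norm_mul_le (p := p) m 2 hm (by norm_num)
      rw [hnorm2] at this
      calc ‖(m.choose 2 : ℤ_[p])‖ = (‖(m.choose 2 : ℤ_[p])‖ * (p:ℝ)⁻¹) * (p:ℝ) := by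
            field_simp
        _ ≤ ‖(m : ℤ_[p])‖ * (p : ℝ) := by
            exact mul_le_mul_of_nonneg_right this hppos.le
    calc ‖(m.choose 2 : ℤ_[p])‖ * ‖phi f 2 t‖
        ≤ (‖(m : ℤ_[p])‖ * (p : ℝ)) * (p : ℝ) ^ (-(3 : ℕ) : ℤ) := by
          exact mul_le_mul hC hphi (norm_nonneg _) (by positivity)
      _ = ‖(m : ℤ_[p])‖ * (p : ℝ) ^ (-(2 : ℤ)) := by
          have h4 : ((p:ℝ)) ^ ((1:ℤ) + -(3:ℕ) : ℤ) = (p:ℝ) ^ (-(2:ℤ)) := by norm_num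
          rw [mul_assoc]
          congr 1
          rw [← h4, zpow_add₀ hppos.ne', zpow_one]
  · have hphi : ‖phi f l t‖ ≤ (p : ℝ) ^ (-(l : ℤ)) :=
      dvd_iff_norm_le.mp (phi_dvd f hf l t)
    have h1 := norm_nat_ge (p := p) l hl h22
    have h2 := choose_norm_mul_le (p := p) m l hm (by omega)
    calc ‖(m.choose l : ℤ_[p])‖ * ‖phi f l t‖
        ≤ ‖(m.choose l : ℤ_[p])‖ * ((p : ℝ) ^ (-(2:ℤ)) * ‖(l : ℤ_[p])‖) :=
          mul_le_mul_of_nonneg_left (hphi.trans h1) (norm_nonneg _)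
      _ = (p : ℝ) ^ (-(2:ℤ)) * (‖(m.choose l : ℤ_[p])‖ * ‖(l : ℤ_[p])‖) := by ring
      _ ≤ (p : ℝ) ^ (-(2:ℤ)) * ‖(m : ℤ_[p])‖ := by
          exact mul_le_mul_of_nonneg_left h2 (by positivity)
      _ = ‖(m : ℤ_[p])‖ * (p : ℝ) ^ (-(2 : ℤ)) := mul_comm _ _

lemma key_norm (t m : ℕ) :
    ‖f ((t + m : ℕ) : ℤ_[p]) - f (t : ℤ_[p])‖ = (p : ℝ)⁻¹ * ‖(m : ℤ_[p])‖ := by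
  rcases Nat.eq_zero_or_pos m with rfl | hm
  · simp
  obtain ⟨m', rfl⟩ : ∃ m', m = m' + 1 := ⟨m - 1, by omega⟩
  set m := m' + 1
  have hnewton := newton_nat (fun k : ℕ => f (k : ℤ_[p])) t m
  have hG : ∀ l, (m.choose l) • (Δ_[1])^[l] (fun k : ℕ => f (k : ℤ_[p])) t
      = (m.choose l : ℤ_[p]) * phi f l t := fun l => by rw [nsmul_eq_mul]; rfl
  rw [show m + 1 = m' + 1 + 1 from rfl, Finset.sum_range_succ', Finset.sum_range_succ'] at hnewton
  have h0 : (m.choose 0) • (Δ_[1])^[0] (fun k : ℕ => f (k : ℤ_[p])) t = f (t : ℤ_[p]) := by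
    simp
  rw [h0] at hnewton
  have hsplit : f ((t + m : ℕ) : ℤ_[p]) - f (t : ℤ_[p])
      = (∑ l ∈ Finset.range m', (m.choose (l + 1 + 1) : ℤ_[p]) * phi f (l + 1 + 1) t)
        + (m.choose 1 : ℤ_[p]) * phi f 1 t := by
    rw [← hG 1]
    have : ∀ l ∈ Finset.range m', (m.choose (l + 1 + 1) : ℤ_[p]) * phi f (l + 1 + 1) t
        = (m.choose (l + 1 + 1)) • (Δ_[1])^[l + 1 + 1] (fun k : ℕ => f (k : ℤ_[p])) t :=
      fun l _ => (hG (l + 1 + 1)).symm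
    rw [Finset.sum_congr rfl this]
    rw [hnewton]
    ring
  have hm0 : ((m : ℤ_[p])) ≠ 0 := Nat.cast_ne_zero.mpr (by omega)
  have hmpos : (0:ℝ) < ‖(m : ℤ_[p])‖ := norm_pos_iff.mpr hm0
  have hppos : (0:ℝ) < p := by exact_mod_cast hp.1.pos
  have hmain : ‖(m.choose 1 : ℤ_[p]) * phi f 1 t‖ = ‖(m : ℤ_[p])‖ * (p:ℝ)⁻¹ := by
    rw [Nat.choose_one_right, norm_mul, norm_phi_one f hf]
  have hrest : ‖∑ l ∈ Finset.range m', (m.choose (l + 1 + 1) : ℤ_[p]) * phi f (l + 1 + 1) t‖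
      ≤ ‖(m : ℤ_[p])‖ * (p : ℝ) ^ (-(2 : ℤ)) := by
    refine IsUltrametricDist.norm_sum_le_of_forall_le_of_nonneg (by positivity) fun l _ => ?_
    exact term_bound f hf t m (l + 1 + 1) (by omega) (by omega)
  have hlt : ‖∑ l ∈ Finset.range m', (m.choose (l + 1 + 1) : ℤ_[p]) * phi f (l + 1 + 1) t‖
      < ‖(m.choose 1 : ℤ_[p]) * phi f 1 t‖ := by
    rw [hmain]
    refine lt_of_le_of_lt hrest ?_
    have : (p:ℝ) ^ (-(2:ℤ)) < (p:ℝ)⁻¹ := by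
      rw [show ((p:ℝ))⁻¹ = (p:ℝ) ^ (-(1:ℤ)) by simp]
      exact zpow_lt_zpow_right₀ (one_lt_p (p := p)) (by norm_num)
    exact (mul_lt_mul_iff_right₀ hmpos).mpr this
  rw [hsplit, PadicInt.norm_add_eq_max_of_ne (ne_of_lt hlt), max_eq_right hlt.le, hmain,
    mul_comm]

end S17

namespace S17
variable {p : ℕ} [hp : Fact p.Prime]
variable (f : ℤ_[p] → ℤ_[p]) (hf : WKS0 p f)
include hf

lemma norm_sub_nat (a b : ℕ) :
    ‖f (a : ℤ_[p]) - f (b : ℤ_[p])‖ = (p : ℝ)⁻¹ * ‖(a : ℤ_[p]) - (b : ℤ_[p])‖ := by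
  rcases le_total b a with h | h
  · have := key_norm f hf b (a - b)
    rw [Nat.add_sub_cancel' h] at this
    rw [this]
    congr 1
    push_cast [Nat.cast_sub h]
    ring
  · have := key_norm f hf a (b - a)
    rw [Nat.add_sub_cancel' h] at this
    rw [← norm_neg (f (a:ℤ_[p]) - f (b:ℤ_[p])), neg_sub, this]
    have h2 : ((b - a : ℕ) : ℤ_[p]) = - ((a : ℤ_[p]) - (b : ℤ_[p])) := by
      push_cast [Nat.cast_sub h]
      ring
    rw [h2, norm_neg]

lemma norm_sub_global (s t : ℤ_[p]) :
    ‖f s - f t‖ = (p : ℝ)⁻¹ * ‖s - t‖ := by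
  have hd : DenseRange (fun ab : ℕ × ℕ => (((ab.1 : ℤ_[p]), (ab.2 : ℤ_[p])) : ℤ_[p] × ℤ_[p])) :=
    PadicInt.denseRange_natCast.prodMap PadicInt.denseRange_natCast
  have hcf : Continuous f := hf.1.1
  have h1 : Continuous (fun st : ℤ_[p] × ℤ_[p] => ‖f st.1 - f st.2‖) := by fun_prop
  have h2 : Continuous (fun st : ℤ_[p] × ℤ_[p] => (p : ℝ)⁻¹ * ‖st.1 - st.2‖) := by fun_prop
  have := hd.equalizer h1 h2 (by
    funext ab
    exact norm_sub_nat f hf ab.1 ab.2)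
  exact congrFun this (s, t)

end S17

namespace S17
variable {p : ℕ} [hp : Fact p.Prime]

lemma f_nat_dvd (f : ℤ_[p] → ℤ_[p]) (hf : WKS0 p f) (k : ℕ) :
    (p : ℤ_[p]) ∣ f (k : ℤ_[p]) := by
  induction k with
  | zero => simpa using hf.2.1
  | succ k IH =>
    have h := hf.1.2 1 (k : ℤ_[p])
    rw [pow_one] at h
    have he : deltaH p 1 f 1 (k : ℤ_[p])
        = f (((k + 1 : ℕ)) : ℤ_[p]) - f (k : ℤ_[p]) := by
      rw [deltaH_nat, Function.iterate_one]
      rfl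
    have : f ((k + 1 : ℕ) : ℤ_[p]) = f (k : ℤ_[p]) + deltaH p 1 f 1 (k : ℤ_[p]) := by
      rw [he]; ring
    rw [this]
    exact dvd_add IH h

lemma norm_prod_padic {ι : Type*} (s : Finset ι) (g : ι → ℤ_[p]) :
    ‖∏ i ∈ s, g i‖ = ∏ i ∈ s, ‖g i‖ := by
  induction s using Finset.cons_induction with
  | empty => simp
  | cons a s ha IH => rw [Finset.prod_cons, Finset.prod_cons, norm_mul, IH]

/-- the combinatorial coefficient in `ℤ_[p]` -/
noncomputable def cZ (n : ℕ) (x : Fin n → ℕ) : ℤ_[p] :=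
  (Δ_[1])^[n] (fun k : ℕ => ∏ i, (k.choose (x i) : ℤ_[p])) 0

lemma coe_iter (g : ℕ → ℤ_[p]) (n x : ℕ) :
    (((Δ_[1])^[n] g x : ℤ_[p]) : ℚ_[p]) = (Δ_[1])^[n] (fun k => (g k : ℚ_[p])) x := by
  have := map_iter (PadicInt.Coe.ringHom (p := p)).toAddMonoidHom g n x
  exact this.symm

lemma cZ_coe (n : ℕ) (x : Fin n → ℕ) :
    ((cZ (p := p) n x : ℤ_[p]) : ℚ_[p])
      = (Δ_[1])^[n] (fun k : ℕ => ∏ i, (k.choose (x i) : ℚ_[p])) 0 := by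
  have hfun : (fun k : ℕ => ((∏ i, (k.choose (x i) : ℤ_[p]) : ℤ_[p]) : ℚ_[p]))
      = fun k : ℕ => ∏ i, (k.choose (x i) : ℚ_[p]) := by
    funext k
    rw [show ((∏ i, (k.choose (x i) : ℤ_[p]) : ℤ_[p]) : ℚ_[p])
        = ∏ i, ((k.choose (x i) : ℤ_[p]) : ℚ_[p]) from
      map_prod (PadicInt.Coe.ringHom (p := p)) _ _]
    simp [PadicInt.coe_natCast]
  rw [cZ, coe_iter, hfun]

lemma cZ_vanish (n : ℕ) (x : Fin n → ℕ) (h : ∑ i, x i < n) : cZ (p := p) n x = 0 := by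
  have hc : ((cZ (p := p) n x : ℤ_[p]) : ℚ_[p]) = 0 := by
    rw [cZ_coe, c_vanish n n x h]
  exact PadicInt.coe_eq_zero.mp hc

lemma cZ_one (n : ℕ) : cZ (p := p) n (fun _ => 1) = (n.factorial : ℤ_[p]) := by
  have hc : ((cZ (p := p) n (fun _ => 1) : ℤ_[p]) : ℚ_[p]) = (n.factorial : ℚ_[p]) := by
    rw [cZ_coe]
    have he : (fun k : ℕ => ∏ _i : Fin n, (k.choose 1 : ℚ_[p]))
        = fun k : ℕ => (k : ℚ_[p]) ^ n := by
      funext k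
      simp [Nat.choose_one_right]
    rw [he, c_one n]
  have h2 : ((cZ (p := p) n (fun _ => 1) : ℤ_[p]) : ℚ_[p])
      = (((n.factorial : ℤ_[p])) : ℚ_[p]) := by rw [hc, PadicInt.coe_natCast]
  exact Subtype.coe_injective h2

lemma sum_max_ge (n : ℕ) (x : Fin n → ℕ) (hx : x ≠ fun _ => 1) (hs : n ≤ ∑ i, x i) :
    n + 1 ≤ ∑ i, max (x i) 1 := by
  have hne : ∃ i, x i ≠ 1 := by
    by_contra hc
    push_neg at hc
    exact hx (funext hc)
  obtain ⟨i0, hi0⟩ := hne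
  have hsplit : ∑ i, max (x i) 1 = max (x i0) 1 + ∑ i ∈ Finset.univ.erase i0, max (x i) 1 :=
    (Finset.add_sum_erase _ _ (Finset.mem_univ i0)).symm
  have hsplit2 : ∑ i, x i = x i0 + ∑ i ∈ Finset.univ.erase i0, x i :=
    (Finset.add_sum_erase _ _ (Finset.mem_univ i0)).symm
  rcases Nat.lt_or_ge (x i0) 1 with h0 | h1
  · have hx0 : x i0 = 0 := by omega
    have hge : ∑ i ∈ Finset.univ.erase i0, x i ≤ ∑ i ∈ Finset.univ.erase i0, max (x i) 1 :=
      Finset.sum_le_sum fun i _ => le_max_left _ _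
    omega
  · have h2 : 2 ≤ x i0 := by omega
    have hcard : (Finset.univ.erase i0).card = n - 1 := by
      rw [Finset.card_erase_of_mem (Finset.mem_univ i0)]
      simp
    have hge : (Finset.univ.erase i0).card * 1 ≤ ∑ i ∈ Finset.univ.erase i0, max (x i) 1 := by
      have := Finset.card_nsmul_le_sum (Finset.univ.erase i0) (fun i => max (x i) 1) 1
        (fun i _ => le_max_right _ _)
      simpa using this
    have hn1 : 1 ≤ n := by
      rcases Nat.eq_zero_or_pos n with rfl | h
      · exact absurd (Subsingleton.elim x (fun _ => 1)) hx
      · exact h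
    have hmax0 : max (x i0) 1 = x i0 := by omega
    omega

end S17

end Aux

theorem stmt17 (p : ℕ) [Fact p.Prime] (n : ℕ) (hn : 1 ≤ n) (f : Fin n → ℤ_[p] → ℤ_[p])
    (hf : ∀ i, WKS0 p (f i)) (ξ : Fin n → ℤ_[p]) (hξ : ∀ i, f i (ξ i) = 0)
    (F : ℤ_[p] → ℤ_[p]) (hF : ∀ s, F s = ∏ i, f i s) :
    (∀ s : ℤ_[p], ‖F s‖ = (p : ℝ) ^ (-(n : ℤ)) * ∏ i, ‖s - ξ i‖) ∧
      ((p : ℤ_[p]) ^ (n + 1) ∣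
        deltaH p 1 F n 0 - (n.factorial : ℤ_[p]) * ∏ i, deltaH p 1 (f i) 1 0) ∧
      ∀ ν : ℕ, ν ≤ n → (p : ℤ_[p]) ^ n ∣ deltaH p 1 F ν 0 := by
  have h0cast : (0 : ℤ_[p]) = ((0 : ℕ) : ℤ_[p]) := by simp
  refine ⟨?_, ?_, ?_⟩
  · -- Part (i)
    intro s
    rw [hF s, S17.norm_prod_padic]
    have he : ∀ i, ‖f i s‖ = (p : ℝ)⁻¹ * ‖s - ξ i‖ := fun i => by
      have := S17.norm_sub_global (f i) (hf i) s (ξ i)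
      rwa [hξ i, sub_zero] at this
    rw [Finset.prod_congr rfl (fun i _ => he i), Finset.prod_mul_distrib, Finset.prod_const,
      Finset.card_univ, Fintype.card_fin]
    congr 1
    rw [zpow_neg, zpow_natCast, inv_pow]
  · -- Part (ii)
    set a : Fin n → ℕ → ℤ_[p] := fun i j => S17.phi (f i) j 0 with ha_def
    have ha_dvd : ∀ i j, (p : ℤ_[p]) ^ j ∣ a i j := fun i j => S17.phi_dvd (f i) (hf i) j 0
    have ha0 : ∀ i, (p : ℤ_[p]) ∣ a i 0 := fun i => by
      have h1 : a i 0 = f i ((0 : ℕ) : ℤ_[p]) := rfl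
      rw [h1, Nat.cast_zero]
      exact (hf i).2.1
    have ha_max : ∀ i j, (p : ℤ_[p]) ^ (max j 1) ∣ a i j := fun i j => by
      rcases Nat.eq_zero_or_pos j with rfl | hj
      · simpa using ha0 i
      · have hm : max j 1 = j := by omega
        rw [hm]
        exact ha_dvd i j
    have ha1 : ∀ i, a i 1 = deltaH p 1 (f i) 1 0 := fun i => S17.phi_zero_eq (f i) (hf i) 1
    have hfP : ∀ i, ∀ k ≤ n, f i (k : ℤ_[p])
        = ∑ j ∈ Finset.range (n + 1), (k.choose j : ℤ_[p]) * a i j := by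
      intro i k hk
      have hnewt := S17.newton_nat (fun k : ℕ => f i (k : ℤ_[p])) 0 k
      rw [zero_add] at hnewt
      have hsub : Finset.range (k + 1) ⊆ Finset.range (n + 1) :=
        Finset.range_subset_range.mpr (by omega)
      calc f i ((k : ℕ) : ℤ_[p]) = ∑ j ∈ Finset.range (k + 1), (k.choose j : ℤ_[p]) * a i j := by
            rw [hnewt]
            exact Finset.sum_congr rfl fun j _ => by rw [nsmul_eq_mul]; rfl
        _ = ∑ j ∈ Finset.range (n + 1), (k.choose j : ℤ_[p]) * a i j :=
            Finset.sum_subset hsub (fun j _ hj2 => by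
              rw [Nat.choose_eq_zero_of_lt (by simp at hj2; omega), Nat.cast_zero, zero_mul])
    have hkey : deltaH p 1 F n 0
        = ∑ x ∈ Fintype.piFinset (fun _ : Fin n => Finset.range (n + 1)),
            S17.cZ n x * ∏ i, a i (x i) := by
      rw [h0cast, S17.deltaH_nat, fwdDiff_iter_eq_sum_shift]
      have hstep1 : ∀ k ∈ Finset.range (n + 1),
          ((-1 : ℤ) ^ (n - k) * (n.choose k)) • ((fun k : ℕ => F (k : ℤ_[p])) (0 + k • 1))
          = ∑ x ∈ Fintype.piFinset (fun _ : Fin n => Finset.range (n + 1)),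
              ((-1 : ℤ) ^ (n - k) * (n.choose k)) •
                ((∏ i, (k.choose (x i) : ℤ_[p])) * ∏ i, a i (x i)) := by
        intro k hk
        have hFk : (fun k : ℕ => F (k : ℤ_[p])) (0 + k • 1)
            = ∏ i, ∑ j ∈ Finset.range (n + 1), (k.choose j : ℤ_[p]) * a i j := by
          simp only [zero_add, smul_eq_mul, mul_one]
          rw [hF]
          exact Finset.prod_congr rfl fun i _ =>
            hfP i k (by simp only [Finset.mem_range] at hk; omega)
        rw [hFk, Finset.prod_univ_sum, Finset.smul_sum]
        exact Finset.sum_congr rfl fun x _ => by rw [Finset.prod_mul_distrib]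
      rw [Finset.sum_congr rfl hstep1, Finset.sum_comm]
      refine Finset.sum_congr rfl fun x _ => ?_
      have hc : S17.cZ n x = ∑ k ∈ Finset.range (n + 1),
          ((-1 : ℤ) ^ (n - k) * (n.choose k)) • (∏ i, (k.choose (x i) : ℤ_[p])) := by
        rw [S17.cZ, fwdDiff_iter_eq_sum_shift]
        exact Finset.sum_congr rfl fun k _ => by simp
      rw [hc, Finset.sum_mul]
      exact Finset.sum_congr rfl fun k _ => by
        rw [zsmul_eq_mul, zsmul_eq_mul]
        ring
    have hprod : ∏ i, deltaH p 1 (f i) 1 0 = ∏ i, a i 1 :=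
      Finset.prod_congr rfl (fun i _ => (ha1 i).symm)
    rw [hkey, hprod]
    have hmem : (fun _ : Fin n => 1) ∈ Fintype.piFinset (fun _ : Fin n => Finset.range (n + 1)) := by
      simp only [Fintype.mem_piFinset, Finset.mem_range]
      intro i
      omega
    rw [← Finset.add_sum_erase _ _ hmem, S17.cZ_one, add_sub_cancel_left]
    refine Finset.dvd_sum fun x hx => ?_
    rw [Finset.mem_erase] at hx
    obtain ⟨hxne, hxmem⟩ := hx
    rcases Nat.lt_or_ge (∑ i, x i) n with hlt | hge
    · rw [S17.cZ_vanish n x hlt, zero_mul]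
      exact dvd_zero _
    · refine Dvd.dvd.mul_left ?_ _
      have h1 : (p : ℤ_[p]) ^ (∑ i, max (x i) 1) ∣ ∏ i, a i (x i) := by
        rw [← Finset.prod_pow_eq_pow_sum]
        exact Finset.prod_dvd_prod_of_dvd _ _ (fun i _ => ha_max i (x i))
      exact dvd_trans (pow_dvd_pow _ (S17.sum_max_ge n x hxne hge)) h1
  · -- Part (iii)
    intro ν hν
    rw [h0cast, S17.deltaH_nat, fwdDiff_iter_eq_sum_shift]
    refine Finset.dvd_sum fun k _ => ?_
    rw [zsmul_eq_mul]
    refine Dvd.dvd.mul_left ?_ _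
    simp only [zero_add, smul_eq_mul, mul_one]
    rw [hF]
    calc (p : ℤ_[p]) ^ n = ∏ _i : Fin n, (p : ℤ_[p]) := by
          rw [Finset.prod_const, Finset.card_univ, Fintype.card_fin]
      _ ∣ ∏ i, f i ((k : ℕ) : ℤ_[p]) :=
          Finset.prod_dvd_prod_of_dvd _ _ (fun i _ => S17.f_nat_dvd (f i) (hf i) k)
end
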